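/- arXiv:math/0012126 — 2 statements merged into one kernel-verified Lean document; each statement's English description precedes it below -/
import Mathlib

section
/- Let a, b, c be positive integers with a ≤ b and let x be an integer with a ≤ x ≤ b. Then Σ_{i=1}^{a} E(i, x−a+i) = a·c·(a+b−x)/(a+b); equivalently, (a+b) · Σ_T Σ_{i=1}^{a} T(i, x−a+i) = a·c·(a+b−x) · N(a,b,c), where the outer sum is over all plane partitions T in the a×b×c box. -/
open Finset

/-- Plane partitions in an `a × b × c` box: assignments of entries in `{0, …, c}` to the
cells of an `a × b` rectangle with weakly decreasing rows and columns. -/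
def PlanePartitions (a b c : ℕ) : Finset (Fin a → Fin b → Fin (c + 1)) :=
  univ.filter (fun T =>
    (∀ i : Fin a, ∀ j j' : Fin b, j ≤ j' → T i j' ≤ T i j) ∧
    (∀ i i' : Fin a, ∀ j : Fin b, i ≤ i' → T i' j ≤ T i j))

/-- The entry `T(i, j)` of a plane partition at the 1-based cell `(i, j)`. -/
def entry (a b c : ℕ) (T : Fin a → Fin b → Fin (c + 1)) (i j : ℕ) : ℕ :=
  if h : 1 ≤ i ∧ i ≤ a ∧ 1 ≤ j ∧ j ≤ b then
    (T ⟨i - 1, by omega⟩ ⟨j - 1, by omega⟩ : ℕ)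
  else 0

/-- `E a b c i j` is the expected value of the entry at the 1-based cell `(i, j)` of a
uniformly random plane partition in an `a × b × c` box. -/
def E (a b c i j : ℕ) : ℚ :=
  (∑ T ∈ PlanePartitions a b c, (entry a b c T i j : ℚ))
    / ((PlanePartitions a b c).card : ℚ)
namespace PPaux

variable {a b c : ℕ}

lemma mem_pp {T : Fin a → Fin b → Fin (c+1)} :
    T ∈ PlanePartitions a b c ↔
    ((∀ i : Fin a, ∀ j j' : Fin b, j ≤ j' → T i j' ≤ T i j) ∧
    (∀ i i' : Fin a, ∀ j : Fin b, i ≤ i' → T i' j ≤ T i j)) := by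
  simp [PlanePartitions]

/-- level-set row length: number of entries in row `i` that are `≥ k`. -/
def L (T : Fin a → Fin b → Fin (c+1)) (k : ℕ) (i : Fin a) : ℕ :=
  (univ.filter (fun j : Fin b => k ≤ (T i j : ℕ))).card

lemma L_le_b (T : Fin a → Fin b → Fin (c+1)) (k : ℕ) (i : Fin a) : L T k i ≤ b := by
  classical
  have := card_filter_le (univ : Finset (Fin b)) (fun j : Fin b => k ≤ (T i j : ℕ))
  simpa [L] using this

lemma lt_L_iff {T : Fin a → Fin b → Fin (c+1)} (hT : T ∈ PlanePartitions a b c)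
    (k : ℕ) (i : Fin a) (j : Fin b) : (j : ℕ) < L T k i ↔ k ≤ (T i j : ℕ) := by
  classical
  obtain ⟨hrow, -⟩ := mem_pp.mp hT
  constructor
  · intro h
    by_contra hc
    push_neg at hc
    have hsub : (univ.filter (fun j' : Fin b => k ≤ (T i j' : ℕ))) ⊆ Finset.Iio j := by
      intro j' hj'
      simp only [mem_filter, mem_univ, true_and] at hj'
      simp only [Finset.mem_Iio]
      by_contra hge
      push_neg at hge
      exact absurd (le_trans hj' (hrow i j j' hge)) (by omega)
    have := card_le_card hsub
    rw [Fin.card_Iio] at this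
    exact absurd h (by unfold L; omega)
  · intro h
    have hsub : Finset.Iic j ⊆ (univ.filter (fun j' : Fin b => k ≤ (T i j' : ℕ))) := by
      intro j' hj'
      simp only [Finset.mem_Iic] at hj'
      simp only [mem_filter, mem_univ, true_and]
      exact le_trans h (hrow i j' j hj')
    have := card_le_card hsub
    rw [Fin.card_Iic] at this
    unfold L; omega

lemma L_anti {T : Fin a → Fin b → Fin (c+1)} (hT : T ∈ PlanePartitions a b c)
    (k : ℕ) {i i' : Fin a} (h : i ≤ i') : L T k i' ≤ L T k i := by
  classical
  obtain ⟨-, hcol⟩ := mem_pp.mp hT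
  apply card_le_card
  intro j hj
  simp only [mem_filter, mem_univ, true_and] at hj ⊢
  exact le_trans hj (hcol i i' j h)

/-- particle position of the `i`-th row at level `k` (0-indexed `i`). -/
def pos (T : Fin a → Fin b → Fin (c+1)) (k : ℕ) (i : Fin a) : ℕ :=
  L T k i + (a - 1 - (i : ℕ))

lemma pos_lt (T : Fin a → Fin b → Fin (c+1)) (k : ℕ) (i : Fin a) : pos T k i < a + b := by
  have h1 := L_le_b T k i
  have h2 := i.isLt
  unfold pos; omega

lemma pos_strictAnti {T : Fin a → Fin b → Fin (c+1)} (hT : T ∈ PlanePartitions a b c)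
    (k : ℕ) {i i' : Fin a} (h : (i:ℕ) < i') : pos T k i' < pos T k i := by
  have h1 := L_anti hT k (le_of_lt (by exact_mod_cast h : i < i'))
  have h2 := i'.isLt
  unfold pos; omega

/-- occupation number of position `q` at level `k`. -/
def O (T : Fin a → Fin b → Fin (c+1)) (k q : ℕ) : ℕ :=
  (univ.filter (fun i : Fin a => pos T k i = q)).card

lemma O_le_one {T : Fin a → Fin b → Fin (c+1)} (hT : T ∈ PlanePartitions a b c)
    (k q : ℕ) : O T k q ≤ 1 := by
  classical
  apply card_le_one.mpr
  intro i hi i' hi'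
  simp only [mem_filter, mem_univ, true_and] at hi hi'
  by_contra hne
  rcases Nat.lt_or_ge (i:ℕ) (i':ℕ) with h | h
  · exact absurd (pos_strictAnti hT k h) (by omega)
  · have : (i':ℕ) < i := by
      rcases Nat.lt_or_ge (i':ℕ) (i:ℕ) with h' | h'
      · exact h'
      · exact absurd (Fin.ext (le_antisymm h h')) (fun e => hne e.symm)
    exact absurd (pos_strictAnti hT k this) (by omega)

lemma sum_O (T : Fin a → Fin b → Fin (c+1)) (k : ℕ) :
    ∑ q ∈ Finset.range (a+b), O T k q = a := by
  classical
  have h := Finset.card_eq_sum_card_fiberwise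
    (f := fun i : Fin a => pos T k i) (s := univ) (t := Finset.range (a+b))
    (fun i _ => Finset.mem_range.mpr (pos_lt T k i))
  rw [Finset.card_univ, Fintype.card_fin] at h
  simpa [O] using h.symm



def ent (a b c : ℕ) (T : Fin a → Fin b → Fin (c+1)) (i j : ℕ) : ℕ :=
  if i = 0 ∨ j = 0 then c
  else if h : 1 ≤ i ∧ i ≤ a ∧ 1 ≤ j ∧ j ≤ b then
    (T ⟨i - 1, by omega⟩ ⟨j - 1, by omega⟩ : ℕ)
  else 0

lemma val_le (T : Fin a → Fin b → Fin (c+1)) (i0 : Fin a) (j0 : Fin b) :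
    (T i0 j0 : ℕ) ≤ c := Nat.lt_succ_iff.mp (Fin.isLt _)

lemma ent_le_c (T : Fin a → Fin b → Fin (c+1)) (i j : ℕ) : ent a b c T i j ≤ c := by
  unfold ent
  split_ifs
  · exact le_refl c
  · exact val_le T _ _
  · exact Nat.zero_le c

lemma ent_eq (T : Fin a → Fin b → Fin (c+1)) (i0 : Fin a) (j0 : Fin b) :
    ent a b c T ((i0:ℕ)+1) ((j0:ℕ)+1) = (T i0 j0 : ℕ) := by
  have h1 : ¬((i0:ℕ)+1 = 0 ∨ (j0:ℕ)+1 = 0) := by omega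
  have h2 : 1 ≤ (i0:ℕ)+1 ∧ (i0:ℕ)+1 ≤ a ∧ 1 ≤ (j0:ℕ)+1 ∧ (j0:ℕ)+1 ≤ b :=
    ⟨by omega, i0.isLt, by omega, j0.isLt⟩
  rw [ent, if_neg h1, dif_pos h2]
  congr 1

lemma ent_eq' (T : Fin a → Fin b → Fin (c+1)) {i j : ℕ} (hi1 : 1 ≤ i) (hia : i ≤ a)
    (hj1 : 1 ≤ j) (hjb : j ≤ b) :
    ent a b c T i j = (T ⟨i-1, by omega⟩ ⟨j-1, by omega⟩ : ℕ) := by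
  rw [ent, if_neg (by omega), dif_pos ⟨hi1, hia, hj1, hjb⟩]

lemma ent_adj_row {T : Fin a → Fin b → Fin (c+1)} (hT : T ∈ PlanePartitions a b c)
    (i j : ℕ) : ent a b c T i (j+1) ≤ ent a b c T i j := by
  obtain ⟨hrow, -⟩ := mem_pp.mp hT
  by_cases hi0 : i = 0
  · simp [ent, hi0]
  by_cases hj0 : j = 0
  · rw [hj0]
    have h2 : ent a b c T i 0 = c := by rw [ent, if_pos (by omega)]
    rw [h2]
    exact ent_le_c T i 1
  rw [ent, ent, if_neg (by omega), if_neg (by omega)]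
  split_ifs with h1 h2 h3
  · have h := hrow ⟨i-1, by omega⟩ ⟨j-1, by omega⟩ ⟨j+1-1, by omega⟩
      (Fin.mk_le_mk.mpr (by omega))
    rw [Fin.le_def] at h
    exact h
  · omega
  · exact Nat.zero_le _
  · exact le_refl 0

lemma ent_adj_col {T : Fin a → Fin b → Fin (c+1)} (hT : T ∈ PlanePartitions a b c)
    (i j : ℕ) : ent a b c T (i+1) j ≤ ent a b c T i j := by
  obtain ⟨-, hcol⟩ := mem_pp.mp hT
  by_cases hj0 : j = 0
  · simp [ent, hj0]
  by_cases hi0 : i = 0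
  · rw [hi0]
    have h2 : ent a b c T 0 j = c := by rw [ent, if_pos (by omega)]
    rw [h2]
    exact ent_le_c T 1 j
  rw [ent, ent, if_neg (by omega), if_neg (by omega)]
  split_ifs with h1 h2 h3
  · have h := hcol ⟨i-1, by omega⟩ ⟨i+1-1, by omega⟩ ⟨j-1, by omega⟩
      (Fin.mk_le_mk.mpr (by omega))
    rw [Fin.le_def] at h
    exact h
  · omega
  · exact Nat.zero_le _
  · exact le_refl 0

lemma mem_pp_of_adj {T : Fin a → Fin b → Fin (c+1)}
    (h1 : ∀ i j, ent a b c T i (j+1) ≤ ent a b c T i j)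
    (h2 : ∀ i j, ent a b c T (i+1) j ≤ ent a b c T i j) :
    T ∈ PlanePartitions a b c := by
  have hrow' : ∀ i j j', j ≤ j' → ent a b c T i j' ≤ ent a b c T i j := by
    intro i j j' h
    induction j', h using Nat.le_induction with
    | base => exact le_refl _
    | succ n hn ih => exact le_trans (h1 i n) ih
  have hcol' : ∀ i i' j, i ≤ i' → ent a b c T i' j ≤ ent a b c T i j := by
    intro i i' j h
    induction i', h using Nat.le_induction with
    | base => exact le_refl _
    | succ n hn ih => exact le_trans (h2 n j) ih
  rw [mem_pp]
  constructor
  · intro i j j' hjj'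
    have h := hrow' ((i:ℕ)+1) ((j:ℕ)+1) ((j':ℕ)+1) (by have := Fin.le_def.mp hjj'; omega)
    rw [ent_eq, ent_eq] at h
    rw [Fin.le_def]
    exact h
  · intro i i' j hii'
    have h := hcol' ((i:ℕ)+1) ((i':ℕ)+1) ((j:ℕ)+1) (by have := Fin.le_def.mp hii'; omega)
    rw [ent_eq, ent_eq] at h
    rw [Fin.le_def]
    exact h


end PPaux

namespace PPaux
section
variable {a b c : ℕ}

def Addk (a b c : ℕ) (T : Fin a → Fin b → Fin (c+1)) (k i j : ℕ) : Prop :=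
  ent a b c T i j < k ∧ k ≤ ent a b c T (i-1) j ∧ k ≤ ent a b c T i (j-1)

def Remk (a b c : ℕ) (T : Fin a → Fin b → Fin (c+1)) (k i j : ℕ) : Prop :=
  k ≤ ent a b c T i j ∧ ent a b c T i (j+1) < k ∧ ent a b c T (i+1) j < k

instance (T : Fin a → Fin b → Fin (c+1)) (k i j : ℕ) : Decidable (Addk a b c T k i j) := by
  unfold Addk; infer_instance

instance (T : Fin a → Fin b → Fin (c+1)) (k i j : ℕ) : Decidable (Remk a b c T k i j) := by
  unfold Remk; infer_instance

lemma Addk_iff {T : Fin a → Fin b → Fin (c+1)} (hT : T ∈ PlanePartitions a b c)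
    {k : ℕ} (hk1 : 1 ≤ k) (hkc : k ≤ c) (i0 : Fin a) (j0 : Fin b) :
    Addk a b c T k ((i0:ℕ)+1) ((j0:ℕ)+1) ↔
      (L T k i0 = (j0:ℕ) ∧
        ∀ i' : Fin a, (i':ℕ)+1 = (i0:ℕ) → (j0:ℕ) < L T k i') := by
  have key1 : (ent a b c T ((i0:ℕ)+1) ((j0:ℕ)+1) < k) ↔ L T k i0 ≤ (j0:ℕ) := by
    rw [ent_eq]
    have h := lt_L_iff hT k i0 j0
    omega
  have key3 : (k ≤ ent a b c T ((i0:ℕ)+1) (((j0:ℕ)+1)-1)) ↔ (j0:ℕ) ≤ L T k i0 := by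
    rcases Nat.eq_zero_or_pos (j0:ℕ) with h0 | h0
    · rw [h0]
      have he : ent a b c T ((i0:ℕ)+1) (0+1-1) = c := by
        rw [ent, if_pos (by omega)]
      rw [he]
      exact iff_of_true hkc (Nat.zero_le _)
    · have hrw : ((j0:ℕ)+1)-1 = ((⟨(j0:ℕ)-1, by omega⟩ : Fin b):ℕ)+1 := by
        simp only [Fin.val_mk]; omega
      rw [hrw, ent_eq]
      have h := lt_L_iff hT k i0 ⟨(j0:ℕ)-1, by omega⟩
      simp only [Fin.val_mk] at h
      omega
  have key2 : (k ≤ ent a b c T (((i0:ℕ)+1)-1) ((j0:ℕ)+1)) ↔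
      (∀ i' : Fin a, (i':ℕ)+1 = (i0:ℕ) → (j0:ℕ) < L T k i') := by
    rcases Nat.eq_zero_or_pos (i0:ℕ) with h0 | h0
    · have he : ent a b c T (((i0:ℕ)+1)-1) ((j0:ℕ)+1) = c := by
        rw [ent, if_pos (by omega)]
      rw [he]
      exact iff_of_true hkc (fun i' h => absurd h (by omega))
    · have hlt : (i0:ℕ)-1 < a := by have := i0.isLt; omega
      have hrw : ((i0:ℕ)+1)-1 = ((⟨(i0:ℕ)-1, hlt⟩ : Fin a):ℕ)+1 := by
        simp only [Fin.val_mk]; omega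
      rw [hrw, ent_eq]
      have h := lt_L_iff hT k ⟨(i0:ℕ)-1, hlt⟩ j0
      constructor
      · intro hh i' hi'
        have : i' = ⟨(i0:ℕ)-1, hlt⟩ := Fin.ext (by simp only [Fin.val_mk]; omega)
        rw [this]
        exact h.mpr hh
      · intro hh
        exact h.mp (hh ⟨(i0:ℕ)-1, hlt⟩ (by simp only [Fin.val_mk]; omega))
  unfold Addk
  rw [key1, key2, key3]
  constructor
  · rintro ⟨h1, h2, h3⟩
    exact ⟨by omega, h2⟩
  · rintro ⟨h1, h2⟩
    exact ⟨by omega, h2, by omega⟩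

lemma Remk_iff {T : Fin a → Fin b → Fin (c+1)} (hT : T ∈ PlanePartitions a b c)
    {k : ℕ} (hk1 : 1 ≤ k) (hkc : k ≤ c) (i0 : Fin a) (j0 : Fin b) :
    Remk a b c T k ((i0:ℕ)+1) ((j0:ℕ)+1) ↔
      (L T k i0 = (j0:ℕ)+1 ∧
        ∀ i' : Fin a, (i':ℕ) = (i0:ℕ)+1 → L T k i' ≤ (j0:ℕ)) := by
  have key1 : (k ≤ ent a b c T ((i0:ℕ)+1) ((j0:ℕ)+1)) ↔ (j0:ℕ) < L T k i0 := by
    rw [ent_eq]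
    exact (lt_L_iff hT k i0 j0).symm
  have key2 : (ent a b c T ((i0:ℕ)+1) (((j0:ℕ)+1)+1) < k) ↔ L T k i0 ≤ (j0:ℕ)+1 := by
    rcases Nat.lt_or_ge ((j0:ℕ)+1) b with hb | hb
    · have hrw : ((j0:ℕ)+1)+1 = ((⟨(j0:ℕ)+1, hb⟩ : Fin b):ℕ)+1 := by
        simp only [Fin.val_mk]
      rw [hrw, ent_eq]
      have h := lt_L_iff hT k i0 ⟨(j0:ℕ)+1, hb⟩
      simp only [Fin.val_mk] at h
      omega
    · have he : ent a b c T ((i0:ℕ)+1) (((j0:ℕ)+1)+1) = 0 := by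
        rw [ent, if_neg (by omega), dif_neg (by omega)]
      rw [he]
      have hL := L_le_b T k i0
      exact iff_of_true (by omega) (by omega)
  have key3 : (ent a b c T (((i0:ℕ)+1)+1) ((j0:ℕ)+1) < k) ↔
      (∀ i' : Fin a, (i':ℕ) = (i0:ℕ)+1 → L T k i' ≤ (j0:ℕ)) := by
    rcases Nat.lt_or_ge ((i0:ℕ)+1) a with ha | ha
    · have hrw : ((i0:ℕ)+1)+1 = ((⟨(i0:ℕ)+1, ha⟩ : Fin a):ℕ)+1 := by
        simp only [Fin.val_mk]
      rw [hrw, ent_eq]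
      have h := lt_L_iff hT k ⟨(i0:ℕ)+1, ha⟩ j0
      constructor
      · intro hh i' hi'
        have : i' = ⟨(i0:ℕ)+1, ha⟩ := Fin.ext (by simp only [Fin.val_mk]; omega)
        rw [this]
        omega
      · intro hh
        have := hh ⟨(i0:ℕ)+1, ha⟩ (by simp only [Fin.val_mk])
        omega
    · have he : ent a b c T (((i0:ℕ)+1)+1) ((j0:ℕ)+1) = 0 := by
        rw [ent, if_neg (by omega), dif_neg (by omega)]
      rw [he]
      exact iff_of_true (by omega) (fun i' h => absurd h (by have := i'.isLt; omega))
  unfold Remk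
  rw [key1, key2, key3]
  constructor
  · rintro ⟨h1, h2, h3⟩
    exact ⟨by omega, h3⟩
  · rintro ⟨h1, h2⟩
    exact ⟨by omega, by omega, h2⟩

lemma count_Addk (T : Fin a → Fin b → Fin (c+1)) (i j : ℕ) :
    ((Finset.Icc 1 c).filter (fun k => Addk a b c T k i j)).card
      = min (ent a b c T (i-1) j) (ent a b c T i (j-1)) - ent a b c T i j := by
  have hup := ent_le_c T (i-1) j
  have hfil : (Finset.Icc 1 c).filter (fun k => Addk a b c T k i j)
      = Finset.Icc (ent a b c T i j + 1) (min (ent a b c T (i-1) j) (ent a b c T i (j-1))) := by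
    ext k
    rw [Finset.mem_filter]
    simp only [Finset.mem_filter, Finset.mem_Icc, Addk, le_min_iff]
    omega
  rw [hfil, Nat.card_Icc]
  omega

lemma count_Remk (T : Fin a → Fin b → Fin (c+1)) (i j : ℕ) :
    ((Finset.Icc 1 c).filter (fun k => Remk a b c T k i j)).card
      = ent a b c T i j - max (ent a b c T i (j+1)) (ent a b c T (i+1) j) := by
  have hev := ent_le_c T i j
  have hfil : (Finset.Icc 1 c).filter (fun k => Remk a b c T k i j)
      = Finset.Icc (max (ent a b c T i (j+1)) (ent a b c T (i+1) j) + 1) (ent a b c T i j) := by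
    ext k
    rw [Finset.mem_filter]
    simp only [Finset.mem_filter, Finset.mem_Icc, Remk, max_lt_iff]
    omega
  rw [hfil, Nat.card_Icc]
  omega

end
end PPaux
namespace PPaux
section
variable {a b c : ℕ}

lemma pos_spec (T : Fin a → Fin b → Fin (c+1)) (k : ℕ) (i : Fin a) :
    pos T k i + (i:ℕ) + 1 = L T k i + a := by
  have := i.isLt
  unfold pos
  omega

lemma O_ne_zero_iff (T : Fin a → Fin b → Fin (c+1)) (k q : ℕ) :
    O T k q ≠ 0 ↔ ∃ i, pos T k i = q := by
  unfold O
  rw [← Nat.pos_iff_ne_zero, Finset.card_pos]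
  constructor
  · rintro ⟨i, hi⟩
    simp only [Finset.mem_filter] at hi
    exact ⟨i, hi.2⟩
  · rintro ⟨i, hi⟩
    exact ⟨i, by simp [hi]⟩

lemma pos_inj {T : Fin a → Fin b → Fin (c+1)} (hT : T ∈ PlanePartitions a b c)
    {k : ℕ} {i i' : Fin a} (h : pos T k i = pos T k i') : i = i' := by
  by_contra hne
  rcases Nat.lt_or_ge (i:ℕ) (i':ℕ) with hlt | hge
  · exact absurd (pos_strictAnti hT k hlt) (by omega)
  · have hlt : (i':ℕ) < (i:ℕ) := by
      rcases Nat.lt_or_ge (i':ℕ) (i:ℕ) with h' | h'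
      · exact h'
      · exact absurd (Fin.ext (le_antisymm hge h')) (fun e => hne e.symm)
    exact absurd (pos_strictAnti hT k hlt) (by omega)

def fileSet (a b : ℕ) (u : ℕ) : Finset (Fin a × Fin b) :=
  Finset.univ.filter (fun p => ((p.2:ℕ)+1) + a = u + ((p.1:ℕ)+1))

def fileA (a b c : ℕ) (T : Fin a → Fin b → Fin (c+1)) (k u : ℕ) : Finset (Fin a × Fin b) :=
  (fileSet a b u).filter (fun p => Addk a b c T k ((p.1:ℕ)+1) ((p.2:ℕ)+1))

def fileR (a b c : ℕ) (T : Fin a → Fin b → Fin (c+1)) (k u : ℕ) : Finset (Fin a × Fin b) :=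
  (fileSet a b u).filter (fun p => Remk a b c T k ((p.1:ℕ)+1) ((p.2:ℕ)+1))

lemma fileA_nonempty_iff {T : Fin a → Fin b → Fin (c+1)} (hT : T ∈ PlanePartitions a b c)
    {k u : ℕ} (hk1 : 1 ≤ k) (hkc : k ≤ c) (hu1 : 1 ≤ u) (hu2 : u ≤ a + b - 1) :
    (fileA a b c T k u).Nonempty ↔ (O T k (u-1) ≠ 0 ∧ O T k u = 0) := by
  constructor
  · rintro ⟨p, hp⟩
    simp only [fileA, fileSet, Finset.mem_filter, Finset.mem_univ, true_and] at hp
    obtain ⟨hfile, hAdd⟩ := hp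
    rw [Addk_iff hT hk1 hkc p.1 p.2] at hAdd
    obtain ⟨hL, hprev⟩ := hAdd
    have hps := pos_spec T k p.1
    have hpos : pos T k p.1 = u - 1 := by omega
    refine ⟨(O_ne_zero_iff T k (u-1)).mpr ⟨p.1, hpos⟩, ?_⟩
    by_contra h0
    obtain ⟨i', hi'⟩ := (O_ne_zero_iff T k u).mp h0
    have hlt : (i':ℕ) < (p.1:ℕ) := by
      rcases Nat.lt_or_ge (i':ℕ) (p.1:ℕ) with h' | h'
      · exact h'
      · rcases Nat.eq_or_lt_of_le h' with h'' | h''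
        · exact absurd (congrArg (pos T k) (Fin.ext h''.symm : i' = p.1)) (by omega)
        · have := pos_strictAnti hT k h''
          omega
    have hval : (i':ℕ) + 1 = (p.1:ℕ) := by
      rcases Nat.lt_or_ge ((i':ℕ)+1) (p.1:ℕ) with hm | hm
      · exfalso
        obtain ⟨m, hmval⟩ : ∃ m : Fin a, (m:ℕ) = (p.1:ℕ)-1 :=
          ⟨⟨(p.1:ℕ)-1, by omega⟩, rfl⟩
        have h2' := pos_strictAnti hT k (i := m) (i' := p.1) (by omega)
        have h3' := pos_strictAnti hT k (i := i') (i' := m) (by omega)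
        omega
      · omega
    have hLp := hprev i' hval
    have hps' := pos_spec T k i'
    omega
  · rintro ⟨h1, h2⟩
    obtain ⟨i0, hi0⟩ := (O_ne_zero_iff T k (u-1)).mp h1
    have hps := pos_spec T k i0
    have hLa : L T k i0 + a = u + (i0:ℕ) := by omega
    have hOu : ∀ i' : Fin a, pos T k i' ≠ u := by
      intro i' hcon
      exact absurd ((O_ne_zero_iff T k u).mpr ⟨i', hcon⟩) (by simp [h2])
    have hLb : L T k i0 < b := by
      by_contra hb
      have hLB := L_le_b T k i0
      have hLeq : L T k i0 = b := by omega
      rcases Nat.eq_zero_or_pos (i0:ℕ) with hz | hpos1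
      · omega
      · have hlt : ((⟨(i0:ℕ)-1, by omega⟩ : Fin a):ℕ) ≤ (i0:ℕ) := by
          simp only [Fin.val_mk]; omega
        have hmge : L T k i0 ≤ L T k ⟨(i0:ℕ)-1, by omega⟩ :=
          L_anti hT k (by rw [Fin.le_def]; simp only [Fin.val_mk]; omega)
        have hmle := L_le_b T k (⟨(i0:ℕ)-1, by omega⟩ : Fin a)
        have hpsm := pos_spec T k (⟨(i0:ℕ)-1, by omega⟩ : Fin a)
        simp only [Fin.val_mk] at hpsm
        exact hOu ⟨(i0:ℕ)-1, by omega⟩ (by omega)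
    refine ⟨(i0, ⟨L T k i0, hLb⟩), ?_⟩
    simp only [fileA, fileSet, Finset.mem_filter, Finset.mem_univ, true_and, Fin.val_mk]
    refine ⟨by omega, ?_⟩
    rw [Addk_iff hT hk1 hkc i0 ⟨L T k i0, hLb⟩]
    refine ⟨rfl, ?_⟩
    intro i' hi'
    simp only [Fin.val_mk]
    by_contra hc
    push_neg at hc
    have hmge : L T k i0 ≤ L T k i' := L_anti hT k (by rw [Fin.le_def]; omega)
    have hmeq : L T k i' = L T k i0 := by omega
    have hpsm := pos_spec T k i'
    exact hOu i' (by omega)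

lemma fileR_nonempty_iff {T : Fin a → Fin b → Fin (c+1)} (hT : T ∈ PlanePartitions a b c)
    {k u : ℕ} (hk1 : 1 ≤ k) (hkc : k ≤ c) (hu1 : 1 ≤ u) (hu2 : u ≤ a + b - 1) :
    (fileR a b c T k u).Nonempty ↔ (O T k u ≠ 0 ∧ O T k (u-1) = 0) := by
  constructor
  · rintro ⟨p, hp⟩
    simp only [fileR, fileSet, Finset.mem_filter, Finset.mem_univ, true_and] at hp
    obtain ⟨hfile, hRem⟩ := hp
    rw [Remk_iff hT hk1 hkc p.1 p.2] at hRem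
    obtain ⟨hL, hnext⟩ := hRem
    have hps := pos_spec T k p.1
    have hpos : pos T k p.1 = u := by omega
    refine ⟨(O_ne_zero_iff T k u).mpr ⟨p.1, hpos⟩, ?_⟩
    by_contra h0
    obtain ⟨i', hi'⟩ := (O_ne_zero_iff T k (u-1)).mp h0
    have hlt : (p.1:ℕ) < (i':ℕ) := by
      rcases Nat.lt_or_ge (p.1:ℕ) (i':ℕ) with h' | h'
      · exact h'
      · rcases Nat.eq_or_lt_of_le h' with h'' | h''
        · exact absurd (congrArg (pos T k) (Fin.ext h''.symm : p.1 = i')) (by omega)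
        · have := pos_strictAnti hT k h''
          omega
    have hval : (i':ℕ) = (p.1:ℕ) + 1 := by
      rcases Nat.lt_or_ge ((p.1:ℕ)+1) (i':ℕ) with hm | hm
      · exfalso
        obtain ⟨m, hmval⟩ : ∃ m : Fin a, (m:ℕ) = (p.1:ℕ)+1 :=
          ⟨⟨(p.1:ℕ)+1, by omega⟩, rfl⟩
        have h2' := pos_strictAnti hT k (i := p.1) (i' := m) (by omega)
        have h3' := pos_strictAnti hT k (i := m) (i' := i') (by omega)
        omega
      · omega
    have hLp := hnext i' hval
    have hps' := pos_spec T k i'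
    omega
  · rintro ⟨h1, h2⟩
    obtain ⟨i0, hi0⟩ := (O_ne_zero_iff T k u).mp h1
    have hps := pos_spec T k i0
    have hLa : L T k i0 + a = u + (i0:ℕ) + 1 := by omega
    have hOm : ∀ i' : Fin a, pos T k i' ≠ u - 1 := by
      intro i' hcon
      exact absurd ((O_ne_zero_iff T k (u-1)).mpr ⟨i', hcon⟩) (by simp [h2])
    have hL1 : 1 ≤ L T k i0 := by
      by_contra hz
      push_neg at hz
      rcases Nat.lt_or_ge ((i0:ℕ)+1) a with hl | hl
      · have hmle : L T k (⟨(i0:ℕ)+1, hl⟩ : Fin a) ≤ L T k i0 :=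
          L_anti hT k (by rw [Fin.le_def]; simp only [Fin.val_mk]; omega)
        have hpsm := pos_spec T k (⟨(i0:ℕ)+1, hl⟩ : Fin a)
        simp only [Fin.val_mk] at hpsm
        exact hOm ⟨(i0:ℕ)+1, hl⟩ (by omega)
      · have := i0.isLt
        omega
    have hLb := L_le_b T k i0
    refine ⟨(i0, ⟨L T k i0 - 1, by omega⟩), ?_⟩
    simp only [fileR, fileSet, Finset.mem_filter, Finset.mem_univ, true_and, Fin.val_mk]
    refine ⟨by omega, ?_⟩
    rw [Remk_iff hT hk1 hkc i0 ⟨L T k i0 - 1, by omega⟩]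
    refine ⟨by simp only [Fin.val_mk]; omega, ?_⟩
    intro i' hi'
    simp only [Fin.val_mk]
    by_contra hc
    push_neg at hc
    have hmle : L T k i' ≤ L T k i0 := L_anti hT k (by rw [Fin.le_def]; omega)
    have hpsm := pos_spec T k i'
    exact hOm i' (by omega)

lemma fileA_card_le_one {T : Fin a → Fin b → Fin (c+1)} (hT : T ∈ PlanePartitions a b c)
    {k u : ℕ} (hk1 : 1 ≤ k) (hkc : k ≤ c) :
    (fileA a b c T k u).card ≤ 1 := by
  apply Finset.card_le_one.mpr
  intro p hp q hq
  simp only [fileA, fileSet, Finset.mem_filter, Finset.mem_univ, true_and] at hp hq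
  rw [Addk_iff hT hk1 hkc p.1 p.2] at hp
  rw [Addk_iff hT hk1 hkc q.1 q.2] at hq
  have hp1 := pos_spec T k p.1
  have hq1 := pos_spec T k q.1
  have hL1 := hp.2.1
  have hL2 := hq.2.1
  have hpospq : pos T k p.1 = pos T k q.1 := by omega
  have h1 : p.1 = q.1 := pos_inj hT hpospq
  have hv : (p.1:ℕ) = (q.1:ℕ) := by rw [h1]
  have h2 : p.2 = q.2 := Fin.ext (by omega)
  exact Prod.ext h1 h2

lemma fileR_card_le_one {T : Fin a → Fin b → Fin (c+1)} (hT : T ∈ PlanePartitions a b c)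
    {k u : ℕ} (hk1 : 1 ≤ k) (hkc : k ≤ c) :
    (fileR a b c T k u).card ≤ 1 := by
  apply Finset.card_le_one.mpr
  intro p hp q hq
  simp only [fileR, fileSet, Finset.mem_filter, Finset.mem_univ, true_and] at hp hq
  rw [Remk_iff hT hk1 hkc p.1 p.2] at hp
  rw [Remk_iff hT hk1 hkc q.1 q.2] at hq
  have hp1 := pos_spec T k p.1
  have hq1 := pos_spec T k q.1
  have hL1 := hp.2.1
  have hL2 := hq.2.1
  have hpospq : pos T k p.1 = pos T k q.1 := by omega
  have h1 : p.1 = q.1 := pos_inj hT hpospq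
  have hv : (p.1:ℕ) = (q.1:ℕ) := by rw [h1]
  have h2 : p.2 = q.2 := Fin.ext (by omega)
  exact Prod.ext h1 h2

lemma key_k {T : Fin a → Fin b → Fin (c+1)} (hT : T ∈ PlanePartitions a b c)
    {k u : ℕ} (hk1 : 1 ≤ k) (hkc : k ≤ c) (hu1 : 1 ≤ u) (hu2 : u ≤ a + b - 1) :
    ((fileR a b c T k u).card : ℤ) - (fileA a b c T k u).card
      = (O T k u : ℤ) - O T k (u-1) := by
  have hA1 := fileA_card_le_one hT (u := u) hk1 hkc
  have hR1 := fileR_card_le_one hT (u := u) hk1 hkc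
  have hOu := O_le_one hT k u
  have hOm := O_le_one hT k (u-1)
  have hAiff : 0 < (fileA a b c T k u).card ↔ (O T k (u-1) ≠ 0 ∧ O T k u = 0) := by
    rw [Finset.card_pos]
    exact fileA_nonempty_iff hT hk1 hkc hu1 hu2
  have hRiff : 0 < (fileR a b c T k u).card ↔ (O T k u ≠ 0 ∧ O T k (u-1) = 0) := by
    rw [Finset.card_pos]
    exact fileR_nonempty_iff hT hk1 hkc hu1 hu2
  rcases Nat.eq_zero_or_pos (O T k u) with h1 | h1 <;>
    rcases Nat.eq_zero_or_pos (O T k (u-1)) with h2 | h2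
  · have hA : (fileA a b c T k u).card = 0 := by
      by_contra h
      exact (hAiff.mp (by omega)).1 h2
    have hR : (fileR a b c T k u).card = 0 := by
      by_contra h
      exact (hRiff.mp (by omega)).1 h1
    omega
  · have hA : 0 < (fileA a b c T k u).card := hAiff.mpr ⟨by omega, h1⟩
    have hR : (fileR a b c T k u).card = 0 := by
      by_contra h
      exact (hRiff.mp (by omega)).1 h1
    omega
  · have hR : 0 < (fileR a b c T k u).card := hRiff.mpr ⟨by omega, h2⟩
    have hA : (fileA a b c T k u).card = 0 := by
      by_contra h
      have := (hAiff.mp (by omega)).2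
      omega
    omega
  · have hA : (fileA a b c T k u).card = 0 := by
      by_contra h
      have := (hAiff.mp (by omega)).2
      omega
    have hR : (fileR a b c T k u).card = 0 := by
      by_contra h
      have := (hRiff.mp (by omega)).2
      omega
    omega

end
end PPaux
namespace PPaux
section
variable {a b c : ℕ}

def upd (T : Fin a → Fin b → Fin (c+1)) (i0 : Fin a) (j0 : Fin b) (v : Fin (c+1)) :
    Fin a → Fin b → Fin (c+1) :=
  fun i' j' => if i' = i0 ∧ j' = j0 then v else T i' j'

lemma ent_upd_ne (T : Fin a → Fin b → Fin (c+1)) (i0 : Fin a) (j0 : Fin b) (v : Fin (c+1))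
    {i j : ℕ} (h : ¬(i = (i0:ℕ)+1 ∧ j = (j0:ℕ)+1)) :
    ent a b c (upd T i0 j0 v) i j = ent a b c T i j := by
  unfold ent
  split_ifs with h1 h2
  · rfl
  · unfold upd
    rw [if_neg]
    rintro ⟨e1, e2⟩
    have hv1 := congrArg Fin.val e1
    have hv2 := congrArg Fin.val e2
    simp only [Fin.val_mk] at hv1 hv2
    exact h ⟨by omega, by omega⟩
  · rfl

lemma ent_upd_eq (T : Fin a → Fin b → Fin (c+1)) (i0 : Fin a) (j0 : Fin b) (v : Fin (c+1)) :
    ent a b c (upd T i0 j0 v) ((i0:ℕ)+1) ((j0:ℕ)+1) = (v:ℕ) := by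
  rw [ent_eq]
  unfold upd
  rw [if_pos ⟨rfl, rfl⟩]

def mnv (a b c : ℕ) (T : Fin a → Fin b → Fin (c+1)) (i0 : Fin a) (j0 : Fin b) : ℕ :=
  min (ent a b c T ((i0:ℕ)) ((j0:ℕ)+1)) (ent a b c T ((i0:ℕ)+1) ((j0:ℕ)))

def mxv (a b c : ℕ) (T : Fin a → Fin b → Fin (c+1)) (i0 : Fin a) (j0 : Fin b) : ℕ :=
  max (ent a b c T ((i0:ℕ)+1) ((j0:ℕ)+1+1)) (ent a b c T ((i0:ℕ)+1+1) ((j0:ℕ)+1))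

def evv (a b c : ℕ) (T : Fin a → Fin b → Fin (c+1)) (i0 : Fin a) (j0 : Fin b) : ℕ :=
  ent a b c T ((i0:ℕ)+1) ((j0:ℕ)+1)

def flipT (a b c : ℕ) (T : Fin a → Fin b → Fin (c+1)) (i0 : Fin a) (j0 : Fin b) :
    Fin a → Fin b → Fin (c+1) :=
  upd T i0 j0 ⟨min c (mnv a b c T i0 j0 + mxv a b c T i0 j0 - evv a b c T i0 j0), by omega⟩

lemma ev_le_mn {T : Fin a → Fin b → Fin (c+1)} (hT : T ∈ PlanePartitions a b c)
    (i0 : Fin a) (j0 : Fin b) : evv a b c T i0 j0 ≤ mnv a b c T i0 j0 := by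
  refine le_min ?_ ?_
  · exact ent_adj_col hT (i0:ℕ) ((j0:ℕ)+1)
  · exact ent_adj_row hT ((i0:ℕ)+1) (j0:ℕ)

lemma mx_le_ev {T : Fin a → Fin b → Fin (c+1)} (hT : T ∈ PlanePartitions a b c)
    (i0 : Fin a) (j0 : Fin b) : mxv a b c T i0 j0 ≤ evv a b c T i0 j0 := by
  refine max_le ?_ ?_
  · exact ent_adj_row hT ((i0:ℕ)+1) ((j0:ℕ)+1)
  · exact ent_adj_col hT ((i0:ℕ)+1) ((j0:ℕ)+1)

lemma mn_le_c (T : Fin a → Fin b → Fin (c+1)) (i0 : Fin a) (j0 : Fin b) :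
    mnv a b c T i0 j0 ≤ c := le_trans (min_le_left _ _) (ent_le_c T _ _)

lemma flip_evv {T : Fin a → Fin b → Fin (c+1)} (hT : T ∈ PlanePartitions a b c)
    (i0 : Fin a) (j0 : Fin b) :
    evv a b c (flipT a b c T i0 j0) i0 j0
      = mnv a b c T i0 j0 + mxv a b c T i0 j0 - evv a b c T i0 j0 := by
  have h1 := ev_le_mn hT i0 j0
  have h2 := mx_le_ev hT i0 j0
  have h3 := mn_le_c T i0 j0
  unfold evv at h1 h2
  unfold evv flipT
  rw [ent_upd_eq]
  simp only [Fin.val_mk]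
  unfold evv
  omega

lemma flip_mnv (T : Fin a → Fin b → Fin (c+1)) (i0 : Fin a) (j0 : Fin b) :
    mnv a b c (flipT a b c T i0 j0) i0 j0 = mnv a b c T i0 j0 := by
  unfold mnv flipT
  rw [ent_upd_ne _ _ _ _ (by omega), ent_upd_ne _ _ _ _ (by omega)]

lemma flip_mxv (T : Fin a → Fin b → Fin (c+1)) (i0 : Fin a) (j0 : Fin b) :
    mxv a b c (flipT a b c T i0 j0) i0 j0 = mxv a b c T i0 j0 := by
  unfold mxv flipT
  rw [ent_upd_ne _ _ _ _ (by omega), ent_upd_ne _ _ _ _ (by omega)]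

lemma flip_mem {T : Fin a → Fin b → Fin (c+1)} (hT : T ∈ PlanePartitions a b c)
    (i0 : Fin a) (j0 : Fin b) :
    flipT a b c T i0 j0 ∈ PlanePartitions a b c := by
  have h1 := ev_le_mn hT i0 j0
  have h2 := mx_le_ev hT i0 j0
  have h3 := mn_le_c T i0 j0
  have hveq : ((⟨min c (mnv a b c T i0 j0 + mxv a b c T i0 j0 - evv a b c T i0 j0),
      by omega⟩ : Fin (c+1)) : ℕ)
      = mnv a b c T i0 j0 + mxv a b c T i0 j0 - evv a b c T i0 j0 := by
    simp only [Fin.val_mk]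
    omega
  have hvmn : mnv a b c T i0 j0 + mxv a b c T i0 j0 - evv a b c T i0 j0
      ≤ mnv a b c T i0 j0 := by omega
  have hvmx : mxv a b c T i0 j0
      ≤ mnv a b c T i0 j0 + mxv a b c T i0 j0 - evv a b c T i0 j0 := by omega
  apply mem_pp_of_adj
  · intro i j
    by_cases hc1 : i = (i0:ℕ)+1 ∧ j = (j0:ℕ)
    · obtain ⟨rfl, rfl⟩ := hc1
      rw [show flipT a b c T i0 j0 = upd T i0 j0 _ from rfl, ent_upd_eq,
        ent_upd_ne _ _ _ _ (by omega), hveq]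
      calc mnv a b c T i0 j0 + mxv a b c T i0 j0 - evv a b c T i0 j0
          ≤ mnv a b c T i0 j0 := hvmn
        _ ≤ ent a b c T ((i0:ℕ)+1) (j0:ℕ) := min_le_right _ _
    · by_cases hc2 : i = (i0:ℕ)+1 ∧ j = (j0:ℕ)+1
      · obtain ⟨rfl, rfl⟩ := hc2
        rw [show flipT a b c T i0 j0 = upd T i0 j0 _ from rfl, ent_upd_eq,
          ent_upd_ne _ _ _ _ (by omega), hveq]
        calc ent a b c T ((i0:ℕ)+1) ((j0:ℕ)+1+1)
            ≤ mxv a b c T i0 j0 := le_max_left _ _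
          _ ≤ _ := hvmx
      · rw [show flipT a b c T i0 j0 = upd T i0 j0 _ from rfl,
          ent_upd_ne _ _ _ _ (by omega), ent_upd_ne _ _ _ _ (by omega)]
        exact ent_adj_row hT i j
  · intro i j
    by_cases hc1 : i = (i0:ℕ) ∧ j = (j0:ℕ)+1
    · obtain ⟨rfl, rfl⟩ := hc1
      rw [show flipT a b c T i0 j0 = upd T i0 j0 _ from rfl, ent_upd_eq,
        ent_upd_ne _ _ _ _ (by omega), hveq]
      calc mnv a b c T i0 j0 + mxv a b c T i0 j0 - evv a b c T i0 j0
          ≤ mnv a b c T i0 j0 := hvmn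
        _ ≤ ent a b c T ((i0:ℕ)) ((j0:ℕ)+1) := min_le_left _ _
    · by_cases hc2 : i = (i0:ℕ)+1 ∧ j = (j0:ℕ)+1
      · obtain ⟨rfl, rfl⟩ := hc2
        rw [show flipT a b c T i0 j0 = upd T i0 j0 _ from rfl, ent_upd_eq,
          ent_upd_ne _ _ _ _ (by omega), hveq]
        calc ent a b c T ((i0:ℕ)+1+1) ((j0:ℕ)+1)
            ≤ mxv a b c T i0 j0 := le_max_right _ _
          _ ≤ _ := hvmx
      · rw [show flipT a b c T i0 j0 = upd T i0 j0 _ from rfl,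
          ent_upd_ne _ _ _ _ (by omega), ent_upd_ne _ _ _ _ (by omega)]
        exact ent_adj_col hT i j

lemma flip_flip {T : Fin a → Fin b → Fin (c+1)} (hT : T ∈ PlanePartitions a b c)
    (i0 : Fin a) (j0 : Fin b) :
    flipT a b c (flipT a b c T i0 j0) i0 j0 = T := by
  have h1 := ev_le_mn hT i0 j0
  have h2 := mx_le_ev hT i0 j0
  have h3 := mn_le_c T i0 j0
  have he := flip_evv hT i0 j0
  have hm := flip_mnv T i0 j0
  have hx := flip_mxv T i0 j0
  funext i' j'
  show upd _ i0 j0 _ i' j' = T i' j'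
  unfold upd
  split_ifs with hcond
  · obtain ⟨rfl, rfl⟩ := hcond
    apply Fin.ext
    simp only [Fin.val_mk, hm, hx, he]
    have hev : evv a b c T i' j' = (T i' j' : ℕ) := by
      unfold evv
      rw [ent_eq]
    omega
  · show upd T i0 j0 _ i' j' = T i' j'
    unfold upd
    rw [if_neg hcond]

lemma flip_ne {T : Fin a → Fin b → Fin (c+1)} (hT : T ∈ PlanePartitions a b c)
    (i0 : Fin a) (j0 : Fin b)
    (hne : 2 * evv a b c T i0 j0 ≠ mnv a b c T i0 j0 + mxv a b c T i0 j0) :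
    flipT a b c T i0 j0 ≠ T := by
  have h1 := ev_le_mn hT i0 j0
  have h2 := mx_le_ev hT i0 j0
  have h3 := mn_le_c T i0 j0
  intro heq
  have := congrArg (fun W => ent a b c W ((i0:ℕ)+1) ((j0:ℕ)+1)) heq
  rw [show flipT a b c T i0 j0 = upd T i0 j0 _ from rfl, ent_upd_eq] at this
  simp only [Fin.val_mk] at this
  have hev : evv a b c T i0 j0 = ent a b c T ((i0:ℕ)+1) ((j0:ℕ)+1) := rfl
  omega

lemma flip_arith (A B C : ℕ) (h1 : B ≤ A) (h2 : A ≤ C) :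
    ((A - B : ℕ) : ℤ) - ((C - A : ℕ) : ℤ)
      + (((C + B - A) - B : ℕ) - ((C - (C + B - A) : ℕ) : ℤ)) = 0 := by
  omega

lemma flip_sum (i0 : Fin a) (j0 : Fin b) :
    ∑ T ∈ PlanePartitions a b c,
      (((evv a b c T i0 j0 - mxv a b c T i0 j0 : ℕ) : ℤ)
        - ((mnv a b c T i0 j0 - evv a b c T i0 j0 : ℕ) : ℤ)) = 0 := by
  apply Finset.sum_involution (fun T _ => flipT a b c T i0 j0)
  · intro T hT
    have h1 := ev_le_mn hT i0 j0
    have h2 := mx_le_ev hT i0 j0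
    have he := flip_evv hT i0 j0
    have hm := flip_mnv T i0 j0
    have hx := flip_mxv T i0 j0
    rw [he, hm, hx]
    exact flip_arith (evv a b c T i0 j0) (mxv a b c T i0 j0) (mnv a b c T i0 j0) h2 h1
  · intro T hT hne heq
    have h1 := ev_le_mn hT i0 j0
    have h2 := mx_le_ev hT i0 j0
    apply flip_ne hT i0 j0 _ heq
    intro h2e
    apply hne
    omega
  · intro T hT
    exact flip_mem hT i0 j0
  · intro T hT
    exact flip_flip hT i0 j0

end
end PPaux
namespace PPaux
section
variable {a b c : ℕ}

lemma sum_ite_le (v : ℕ) (hv : v ≤ c) :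
    ∑ k ∈ Finset.Icc 1 c, (if k ≤ v then 1 else 0) = v := by
  have hfil : (Finset.Icc 1 c).filter (fun k => k ≤ v) = Finset.Icc 1 v := by
    ext k
    simp only [Finset.mem_filter, Finset.mem_Icc]
    omega
  rw [← Finset.sum_filter, hfil]
  simp [Nat.card_Icc]

lemma card_ge_filter (T : Fin a → Fin b → Fin (c+1)) (k x : ℕ) :
    (Finset.univ.filter (fun i0 : Fin a => x ≤ pos T k i0)).card
      = ∑ u ∈ Finset.Ico x (a+b), O T k u := by
  have h := Finset.card_eq_sum_card_fiberwise
    (f := fun i0 : Fin a => pos T k i0)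
    (s := Finset.univ.filter (fun i0 : Fin a => x ≤ pos T k i0))
    (t := Finset.Ico x (a+b))
    (fun i0 hi0 => by
      rw [Finset.mem_coe] at hi0
      simp only [Finset.mem_filter, Finset.mem_univ, true_and] at hi0
      exact Finset.mem_Ico.mpr ⟨hi0, pos_lt T k i0⟩)
  rw [h]
  apply Finset.sum_congr rfl
  intro u hu
  rw [Finset.mem_Ico] at hu
  unfold O
  congr 1
  ext i0
  simp only [Finset.mem_filter, Finset.mem_univ, true_and]
  constructor
  · rintro ⟨h1, h2⟩
    exact h2
  · intro h1
    exact ⟨by omega, h1⟩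

lemma diag_sum {T : Fin a → Fin b → Fin (c+1)} (hT : T ∈ PlanePartitions a b c)
    {x : ℕ} (ha : 0 < a) (hx1 : a ≤ x) (hx2 : x ≤ b) :
    ∑ i ∈ Finset.Icc 1 a, entry a b c T i (x+i-a)
      = ∑ k ∈ Finset.Icc 1 c, ∑ u ∈ Finset.Ico x (a+b), O T k u := by
  have hstep1 : ∑ i ∈ Finset.Icc 1 a, entry a b c T i (x+i-a)
      = ∑ i0 : Fin a, entry a b c T ((i0:ℕ)+1) (x+((i0:ℕ)+1)-a) := by
    rw [Fin.sum_univ_eq_sum_range (fun i0 => entry a b c T (i0+1) (x+(i0+1)-a)) a]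
    rw [← Finset.Ico_add_one_right_eq_Icc, Finset.sum_Ico_eq_sum_range]
    apply Finset.sum_congr (by congr 1)
    intro i _
    congr 1 <;> omega
  rw [hstep1]
  have hstep2 : ∀ i0 : Fin a,
      entry a b c T ((i0:ℕ)+1) (x+((i0:ℕ)+1)-a)
        = ∑ k ∈ Finset.Icc 1 c, (if x ≤ pos T k i0 then 1 else 0) := by
    intro i0
    have hi0a := i0.isLt
    have hcond : 1 ≤ (i0:ℕ)+1 ∧ (i0:ℕ)+1 ≤ a ∧ 1 ≤ x+((i0:ℕ)+1)-a ∧ x+((i0:ℕ)+1)-a ≤ b :=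
      ⟨by omega, by omega, by omega, by omega⟩
    rw [entry, dif_pos hcond]
    have hjlt : x+((i0:ℕ)+1)-a-1 < b := by omega
    have hieq : ((⟨(i0:ℕ)+1-1, by omega⟩ : Fin a)) = i0 := Fin.ext (by simp)
    rw [show (⟨(i0:ℕ)+1-1, by omega⟩ : Fin a) = i0 from Fin.ext (by simp)]
    set j0 : Fin b := ⟨x+((i0:ℕ)+1)-a-1, hjlt⟩ with hj0
    have hvle : (T i0 j0 : ℕ) ≤ c := val_le T i0 j0
    rw [← sum_ite_le (v := (T i0 j0 : ℕ)) hvle]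
    apply Finset.sum_congr rfl
    intro k hk
    rw [Finset.mem_Icc] at hk
    have hiff := lt_L_iff hT k i0 j0
    have hps := pos_spec T k i0
    have hj0v : (j0:ℕ) = x+((i0:ℕ)+1)-a-1 := rfl
    by_cases hc1 : k ≤ (T i0 j0 : ℕ)
    · rw [if_pos hc1, if_pos (by omega)]
    · rw [if_neg hc1, if_neg (by omega)]
  calc ∑ i0 : Fin a, entry a b c T ((i0:ℕ)+1) (x+((i0:ℕ)+1)-a)
      = ∑ i0 : Fin a, ∑ k ∈ Finset.Icc 1 c, (if x ≤ pos T k i0 then 1 else 0) :=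
        Finset.sum_congr rfl (fun i0 _ => hstep2 i0)
    _ = ∑ k ∈ Finset.Icc 1 c, ∑ i0 : Fin a, (if x ≤ pos T k i0 then 1 else 0) :=
        Finset.sum_comm
    _ = ∑ k ∈ Finset.Icc 1 c, ∑ u ∈ Finset.Ico x (a+b), O T k u := by
        apply Finset.sum_congr rfl
        intro k _
        rw [← card_ge_filter T k x, Finset.card_filter]

/-- the total occupation of position `u`, summed over levels and plane partitions. -/
def Fz (a b c : ℕ) (u : ℕ) : ℤ :=
  ∑ T ∈ PlanePartitions a b c, ∑ k ∈ Finset.Icc 1 c, (O T k u : ℤ)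

lemma Fz_step {u : ℕ} (hu1 : 1 ≤ u) (hu2 : u ≤ a + b - 1) :
    Fz a b c u = Fz a b c (u-1) := by
  have hmain : ∑ T ∈ PlanePartitions a b c,
      (∑ k ∈ Finset.Icc 1 c, ((O T k u : ℤ) - O T k (u-1))) = 0 := by
    have hTeq : ∀ T ∈ PlanePartitions a b c,
        ∑ k ∈ Finset.Icc 1 c, ((O T k u : ℤ) - O T k (u-1))
          = ∑ p ∈ fileSet a b u,
              (((evv a b c T p.1 p.2 - mxv a b c T p.1 p.2 : ℕ) : ℤ)
                - ((mnv a b c T p.1 p.2 - evv a b c T p.1 p.2 : ℕ) : ℤ)) := by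
      intro T hT
      have h1 : ∑ k ∈ Finset.Icc 1 c, ((O T k u : ℤ) - O T k (u-1))
          = ∑ k ∈ Finset.Icc 1 c,
              (((fileR a b c T k u).card : ℤ) - (fileA a b c T k u).card) := by
        apply Finset.sum_congr rfl
        intro k hk
        rw [Finset.mem_Icc] at hk
        exact (key_k hT hk.1 hk.2 hu1 hu2).symm
      rw [h1]
      have hR : ∑ k ∈ Finset.Icc 1 c, ((fileR a b c T k u).card : ℤ)
          = ∑ p ∈ fileSet a b u, ((evv a b c T p.1 p.2 - mxv a b c T p.1 p.2 : ℕ) : ℤ) := by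
        have hRn : ∑ k ∈ Finset.Icc 1 c, (fileR a b c T k u).card
            = ∑ p ∈ fileSet a b u, (evv a b c T p.1 p.2 - mxv a b c T p.1 p.2) := by
          have e1 : ∀ k, (fileR a b c T k u).card
              = ∑ p ∈ fileSet a b u,
                  (if Remk a b c T k ((p.1:ℕ)+1) ((p.2:ℕ)+1) then 1 else 0) := by
            intro k
            rw [fileR, Finset.card_filter]
          simp only [e1]
          rw [Finset.sum_comm]
          apply Finset.sum_congr rfl
          intro p _
          rw [← Finset.card_filter]
          have := count_Remk T ((p.1:ℕ)+1) ((p.2:ℕ)+1)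
          rw [this]
          rfl
        calc ∑ k ∈ Finset.Icc 1 c, ((fileR a b c T k u).card : ℤ)
            = ((∑ k ∈ Finset.Icc 1 c, (fileR a b c T k u).card : ℕ) : ℤ) := by push_cast; rfl
          _ = _ := by rw [hRn]; push_cast; rfl
      have hA : ∑ k ∈ Finset.Icc 1 c, ((fileA a b c T k u).card : ℤ)
          = ∑ p ∈ fileSet a b u, ((mnv a b c T p.1 p.2 - evv a b c T p.1 p.2 : ℕ) : ℤ) := by
        have hAn : ∑ k ∈ Finset.Icc 1 c, (fileA a b c T k u).card
            = ∑ p ∈ fileSet a b u, (mnv a b c T p.1 p.2 - evv a b c T p.1 p.2) := by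
          have e1 : ∀ k, (fileA a b c T k u).card
              = ∑ p ∈ fileSet a b u,
                  (if Addk a b c T k ((p.1:ℕ)+1) ((p.2:ℕ)+1) then 1 else 0) := by
            intro k
            rw [fileA, Finset.card_filter]
          simp only [e1]
          rw [Finset.sum_comm]
          apply Finset.sum_congr rfl
          intro p _
          rw [← Finset.card_filter]
          have h2 := count_Addk T ((p.1:ℕ)+1) ((p.2:ℕ)+1)
          simp only [Nat.add_sub_cancel] at h2
          rw [h2]
          rfl
        calc ∑ k ∈ Finset.Icc 1 c, ((fileA a b c T k u).card : ℤ)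
            = ((∑ k ∈ Finset.Icc 1 c, (fileA a b c T k u).card : ℕ) : ℤ) := by push_cast; rfl
          _ = _ := by rw [hAn]; push_cast; rfl
      rw [Finset.sum_sub_distrib, hR, hA, ← Finset.sum_sub_distrib]
    rw [Finset.sum_congr rfl hTeq, Finset.sum_comm]
    apply Finset.sum_eq_zero
    intro p _
    exact flip_sum p.1 p.2
  unfold Fz
  have := Finset.sum_congr rfl
    (fun T (hT : T ∈ PlanePartitions a b c) => Finset.sum_sub_distrib
      (f := fun k => (O T k u : ℤ)) (g := fun k => (O T k (u-1) : ℤ)) (s := Finset.Icc 1 c))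
  rw [this] at hmain
  rw [Finset.sum_sub_distrib] at hmain
  omega

lemma Fz_const {u : ℕ} (hu : u ≤ a + b - 1) : Fz a b c u = Fz a b c 0 := by
  induction u with
  | zero => rfl
  | succ n ih =>
    have h1 := Fz_step (a := a) (b := b) (c := c) (u := n+1) (by omega) hu
    simp only [Nat.add_sub_cancel] at h1
    rw [h1]
    exact ih (by omega)

lemma Fz_total (ha : 0 < a) (hb : 0 < b) :
    ((a + b : ℕ) : ℤ) * Fz a b c 0
      = ((PlanePartitions a b c).card : ℤ) * c * a := by
  have h1 : ∑ u ∈ Finset.range (a+b), Fz a b c u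
      = ((a+b : ℕ) : ℤ) * Fz a b c 0 := by
    rw [Finset.sum_congr rfl (fun u hu => Fz_const (by
      rw [Finset.mem_range] at hu; omega))]
    simp [mul_comm]
  rw [← h1]
  unfold Fz
  rw [Finset.sum_comm]
  have h2 : ∀ T ∈ PlanePartitions a b c,
      ∑ u ∈ Finset.range (a+b), ∑ k ∈ Finset.Icc 1 c, (O T k u : ℤ)
        = (c : ℤ) * a := by
    intro T hT
    rw [Finset.sum_comm]
    have h3 : ∀ k ∈ Finset.Icc 1 c,
        ∑ u ∈ Finset.range (a+b), (O T k u : ℤ) = (a : ℤ) := by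
      intro k _
      have := sum_O T k
      calc ∑ u ∈ Finset.range (a+b), (O T k u : ℤ)
          = ((∑ u ∈ Finset.range (a+b), O T k u : ℕ) : ℤ) := by push_cast; rfl
        _ = (a : ℤ) := by rw [this]
    rw [Finset.sum_congr rfl h3]
    simp [Nat.card_Icc, mul_comm]
  rw [Finset.sum_congr rfl h2, Finset.sum_const, nsmul_eq_mul]
  ring

lemma pp_nonempty : (0 : ℤ) < ((PlanePartitions a b c).card : ℤ) := by
  have : (fun _ _ => (0 : Fin (c+1)) : Fin a → Fin b → Fin (c+1)) ∈ PlanePartitions a b c := by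
    rw [mem_pp]
    exact ⟨fun _ _ _ _ => le_refl _, fun _ _ _ _ => le_refl _⟩
  have := Finset.card_pos.mpr ⟨_, this⟩
  exact_mod_cast this

lemma main_int (ha : 0 < a) (hb : 0 < b) {x : ℕ} (hx1 : a ≤ x) (hx2 : x ≤ b) :
    ((a + b : ℕ) : ℤ) * ∑ T ∈ PlanePartitions a b c,
        ((∑ i ∈ Finset.Icc 1 a, entry a b c T i (x+i-a) : ℕ) : ℤ)
      = ((a + b - x : ℕ) : ℤ) * ((PlanePartitions a b c).card : ℤ) * c * a := by
  have hS : ∑ T ∈ PlanePartitions a b c,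
      ((∑ i ∈ Finset.Icc 1 a, entry a b c T i (x+i-a) : ℕ) : ℤ)
        = ((a + b - x : ℕ) : ℤ) * Fz a b c 0 := by
    have h1 : ∀ T ∈ PlanePartitions a b c,
        ((∑ i ∈ Finset.Icc 1 a, entry a b c T i (x+i-a) : ℕ) : ℤ)
          = ∑ u ∈ Finset.Ico x (a+b), ∑ k ∈ Finset.Icc 1 c, (O T k u : ℤ) := by
      intro T hT
      rw [diag_sum hT ha hx1 hx2]
      push_cast
      rw [Finset.sum_comm]
    rw [Finset.sum_congr rfl h1, Finset.sum_comm]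
    have h2 : ∀ u ∈ Finset.Ico x (a+b), (Fz a b c u) = Fz a b c 0 := by
      intro u hu
      rw [Finset.mem_Ico] at hu
      exact Fz_const (by omega)
    calc ∑ u ∈ Finset.Ico x (a+b), ∑ T ∈ PlanePartitions a b c,
          ∑ k ∈ Finset.Icc 1 c, (O T k u : ℤ)
        = ∑ u ∈ Finset.Ico x (a+b), Fz a b c u := rfl
      _ = ∑ u ∈ Finset.Ico x (a+b), Fz a b c 0 := Finset.sum_congr rfl h2
      _ = ((a + b - x : ℕ) : ℤ) * Fz a b c 0 := by
          rw [Finset.sum_const, Nat.card_Ico, nsmul_eq_mul]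
  rw [hS]
  have := Fz_total (a := a) (b := b) (c := c) ha hb
  calc ((a + b : ℕ) : ℤ) * (((a + b - x : ℕ) : ℤ) * Fz a b c 0)
      = ((a + b - x : ℕ) : ℤ) * (((a + b : ℕ) : ℤ) * Fz a b c 0) := by ring
    _ = ((a + b - x : ℕ) : ℤ) * (((PlanePartitions a b c).card : ℤ) * c * a) := by rw [this]
    _ = _ := by ring

end
end PPaux

theorem diagonal_expected_sum_middle_a_le_b (a b c : ℕ) (ha : 0 < a) (hb : 0 < b)
    (hc : 0 < c) (hab : a ≤ b) (x : ℕ) (hx1 : a ≤ x) (hx2 : x ≤ b) :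
    ∑ i ∈ Finset.Icc 1 a, E a b c i (x + i - a)
      = (a : ℚ) * c * ((a : ℚ) + b - x) / ((a : ℚ) + b) := by
  classical
  have hN : (0 : ℚ) < ((PlanePartitions a b c).card : ℚ) := by
    exact_mod_cast PPaux.pp_nonempty (a := a) (b := b) (c := c)
  have hab0 : (0 : ℚ) < (a : ℚ) + (b : ℚ) := by positivity
  have hL : ∑ i ∈ Finset.Icc 1 a, E a b c i (x + i - a)
      = (∑ T ∈ PlanePartitions a b c,
          ((∑ i ∈ Finset.Icc 1 a, entry a b c T i (x + i - a) : ℕ) : ℚ))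
        / ((PlanePartitions a b c).card : ℚ) := by
    simp only [E]
    rw [← Finset.sum_div]
    congr 1
    rw [Finset.sum_comm]
    apply Finset.sum_congr rfl
    intro T _
    push_cast
    rfl
  rw [hL]
  have hZ := PPaux.main_int (a := a) (b := b) (c := c) ha hb hx1 hx2
  have hxab : x ≤ a + b := by omega
  have hZQ := congrArg (fun z : ℤ => (z : ℚ)) hZ
  push_cast [Nat.cast_sub hxab] at hZQ
  rw [div_eq_div_iff hN.ne' hab0.ne']
  push_cast
  linear_combination hZQ
end

section
/- Let a, b, c be positive integers with b ≤ a and let x be an integer with b ≤ x ≤ a. Then Σ_{i=a+1−x}^{a+b−x} E(i, x−a+i) = b·c·x/(a+b); equivalently, (a+b) · Σ_T Σ_{i=a+1−x}^{a+b−x} T(i, x−a+i) = b·c·x · N(a,b,c), where the outer sum is over all plane partitions T in the a×b×c box. -/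
set_option maxHeartbeats 4000000


open Finset

namespace PPDiag

variable {a b c : ℕ}

/-- Extension of a plane partition to all of `ℤ²`, with value `c` on the top/left boundary
region and `0` on the bottom/right boundary region. -/
def ext (T : Fin a → Fin b → Fin (c + 1)) (i j : ℤ) : ℤ :=
  if h : 1 ≤ i ∧ i ≤ (a : ℤ) ∧ 1 ≤ j ∧ j ≤ (b : ℤ) then
    ((T ⟨(i - 1).toNat, by omega⟩ ⟨(j - 1).toNat, by omega⟩ : ℕ) : ℤ)
  else if i ≤ 0 ∨ j ≤ 0 then (c : ℤ) else 0

lemma ext_nonneg (T : Fin a → Fin b → Fin (c + 1)) (i j : ℤ) : 0 ≤ ext T i j := by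
  unfold ext; split_ifs <;> positivity

lemma ext_le (T : Fin a → Fin b → Fin (c + 1)) (i j : ℤ) : ext T i j ≤ (c : ℤ) := by
  unfold ext; split_ifs with h1 h2
  · have := (T ⟨(i - 1).toNat, by omega⟩ ⟨(j - 1).toNat, by omega⟩).isLt
    omega
  · exact le_refl _
  · positivity

lemma ext_low_i (T : Fin a → Fin b → Fin (c + 1)) (i j : ℤ) (hi : i ≤ 0) :
    ext T i j = (c : ℤ) := by
  unfold ext
  rw [dif_neg (by omega), if_pos (Or.inl hi)]

lemma ext_low_j (T : Fin a → Fin b → Fin (c + 1)) (i j : ℤ) (hj : j ≤ 0) :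
    ext T i j = (c : ℤ) := by
  unfold ext
  rw [dif_neg (by omega), if_pos (Or.inr hj)]

lemma ext_high_i (T : Fin a → Fin b → Fin (c + 1)) (i j : ℤ) (hi : (a : ℤ) < i) (hj : 1 ≤ j) :
    ext T i j = 0 := by
  unfold ext
  rw [dif_neg (by omega), if_neg (by omega)]

lemma ext_high_j (T : Fin a → Fin b → Fin (c + 1)) (i j : ℤ) (hj : (b : ℤ) < j) (hi : 1 ≤ i) :
    ext T i j = 0 := by
  unfold ext
  rw [dif_neg (by omega), if_neg (by omega)]

lemma ext_box (T : Fin a → Fin b → Fin (c + 1)) (i j : ℤ)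
    (h1 : 1 ≤ i) (h2 : i ≤ (a : ℤ)) (h3 : 1 ≤ j) (h4 : j ≤ (b : ℤ)) :
    ext T i j = ((T ⟨(i - 1).toNat, by omega⟩ ⟨(j - 1).toNat, by omega⟩ : ℕ) : ℤ) := by
  unfold ext; rw [dif_pos ⟨h1, h2, h3, h4⟩]

lemma mem_pp (T : Fin a → Fin b → Fin (c + 1)) :
    T ∈ PlanePartitions a b c ↔
      ((∀ i : Fin a, ∀ j j' : Fin b, j ≤ j' → T i j' ≤ T i j) ∧
        (∀ i i' : Fin a, ∀ j : Fin b, i ≤ i' → T i' j ≤ T i j)) := by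
  simp [PlanePartitions]

lemma ext_anti_row {T : Fin a → Fin b → Fin (c + 1)} (hT : T ∈ PlanePartitions a b c)
    (i j : ℤ) : ext T (i + 1) j ≤ ext T i j := by
  obtain ⟨hrow, hcol⟩ := (mem_pp T).1 hT
  rcases le_or_gt i 0 with h | h
  · rw [ext_low_i T i j h]; exact ext_le T (i + 1) j
  rcases le_or_gt j 0 with h' | h'
  · rw [ext_low_j T (i + 1) j h', ext_low_j T i j h']
  rcases le_or_gt (b : ℤ) (j - 1) with h2 | h2
  · rw [ext_high_j T (i + 1) j (by omega) (by omega)]; exact ext_nonneg T i j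
  rcases le_or_gt (a : ℤ) i with h3 | h3
  · rw [ext_high_i T (i + 1) j (by omega) (by omega)]; exact ext_nonneg T i j
  · rw [ext_box T i j (by omega) (by omega) (by omega) (by omega),
      ext_box T (i + 1) j (by omega) (by omega) (by omega) (by omega)]
    have hle : T ⟨(i + 1 - 1).toNat, by omega⟩ ⟨(j - 1).toNat, by omega⟩
        ≤ T ⟨(i - 1).toNat, by omega⟩ ⟨(j - 1).toNat, by omega⟩ := by
      apply hcol
      simp only [Fin.mk_le_mk]
      omega
    exact_mod_cast hle

lemma ext_anti_col {T : Fin a → Fin b → Fin (c + 1)} (hT : T ∈ PlanePartitions a b c)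
    (i j : ℤ) : ext T i (j + 1) ≤ ext T i j := by
  obtain ⟨hrow, hcol⟩ := (mem_pp T).1 hT
  rcases le_or_gt j 0 with h | h
  · rw [ext_low_j T i j h]; exact ext_le T i (j + 1)
  rcases le_or_gt i 0 with h' | h'
  · rw [ext_low_i T i (j + 1) h', ext_low_i T i j h']
  rcases le_or_gt (a : ℤ) (i - 1) with h2 | h2
  · rw [ext_high_i T i (j + 1) (by omega) (by omega)]; exact ext_nonneg T i j
  rcases le_or_gt (b : ℤ) j with h3 | h3
  · rw [ext_high_j T i (j + 1) (by omega) (by omega)]; exact ext_nonneg T i j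
  · rw [ext_box T i j (by omega) (by omega) (by omega) (by omega),
      ext_box T i (j + 1) (by omega) (by omega) (by omega) (by omega)]
    have hle : T ⟨(i - 1).toNat, by omega⟩ ⟨(j + 1 - 1).toNat, by omega⟩
        ≤ T ⟨(i - 1).toNat, by omega⟩ ⟨(j - 1).toNat, by omega⟩ := by
      apply hrow
      simp only [Fin.mk_le_mk]
      omega
    exact_mod_cast hle

/-- Diagonal sum statistic: sum of `b` extended entries on the diagonal with parameter `t`. -/
def Wd (T : Fin a → Fin b → Fin (c + 1)) (t : ℤ) : ℤ :=
  ∑ k ∈ Finset.range b, ext T ((a : ℤ) + 1 - t + k) ((k : ℤ) + 1)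

/-- Local toggle statistic at cell `(i,j)`. -/
def Rt (T : Fin a → Fin b → Fin (c + 1)) (i j : ℤ) : ℤ :=
  2 * ext T i j - max (ext T (i + 1) j) (ext T i (j + 1))
    - min (ext T (i - 1) j) (ext T i (j - 1))

/-- Telescoping auxiliary. -/
def tf (T : Fin a → Fin b → Fin (c + 1)) (t : ℤ) (k : ℕ) : ℤ :=
  max (ext T ((a : ℤ) - t + k - 1) ((k : ℤ) + 1) - ext T ((a : ℤ) - t + k) (k : ℤ)) 0

lemma Wd_zero (T : Fin a → Fin b → Fin (c + 1)) : Wd T 0 = 0 := by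
  unfold Wd
  apply Finset.sum_eq_zero
  intro k _
  exact ext_high_i T _ _ (by omega) (by omega)

lemma Wd_top (T : Fin a → Fin b → Fin (c + 1)) : Wd T ((a : ℤ) + b) = (b : ℤ) * c := by
  unfold Wd
  have h : ∀ k ∈ Finset.range b,
      ext T ((a : ℤ) + 1 - ((a : ℤ) + (b : ℤ)) + (k : ℕ)) ((k : ℤ) + 1) = (c : ℤ) := by
    intro k hk
    simp only [Finset.mem_range] at hk
    exact ext_low_i T _ _ (by omega)
  rw [Finset.sum_congr rfl h]
  simp [mul_comm]

lemma key (T : Fin a → Fin b → Fin (c + 1)) (t : ℤ) (ht0 : 0 ≤ t)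
    (ht1 : t + 2 ≤ (a : ℤ) + b) :
    2 * Wd T (t + 1) - Wd T t - Wd T (t + 2)
      = ∑ k ∈ Finset.range b, Rt T ((a : ℤ) - t + k) ((k : ℤ) + 1) := by
  have hmain : 2 * Wd T (t + 1) - Wd T t - Wd T (t + 2)
      = ∑ k ∈ Finset.range b,
          (2 * ext T ((a : ℤ) - t + k) ((k : ℤ) + 1)
            - ext T ((a : ℤ) - t + k + 1) ((k : ℤ) + 1)
            - ext T ((a : ℤ) - t + k - 1) ((k : ℤ) + 1)) := by
    unfold Wd
    rw [Finset.mul_sum, ← Finset.sum_sub_distrib, ← Finset.sum_sub_distrib]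
    apply Finset.sum_congr rfl
    intro k _
    rw [show (a : ℤ) + 1 - (t + 1) + k = (a : ℤ) - t + k by ring,
      show (a : ℤ) + 1 - t + k = (a : ℤ) - t + k + 1 by ring,
      show (a : ℤ) + 1 - (t + 2) + k = (a : ℤ) - t + k - 1 by ring]
  have htel : ∑ k ∈ Finset.range b,
        ((2 * ext T ((a : ℤ) - t + k) ((k : ℤ) + 1)
            - ext T ((a : ℤ) - t + k + 1) ((k : ℤ) + 1)
            - ext T ((a : ℤ) - t + k - 1) ((k : ℤ) + 1))
          - Rt T ((a : ℤ) - t + k) ((k : ℤ) + 1))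
      = tf T t b - tf T t 0 := by
    rw [← Finset.sum_range_sub (tf T t) b]
    apply Finset.sum_congr rfl
    intro k _
    unfold Rt tf
    push_cast
    have e1 : (a : ℤ) - t + ((k : ℤ) + 1) = (a : ℤ) - t + k + 1 := by ring
    have e2 : (a : ℤ) - t + (k : ℤ) + 1 - 1 = (a : ℤ) - t + k := by ring
    have e3 : ((k : ℤ) + 1) + 1 = (k : ℤ) + 2 := by ring
    have e4 : ((k : ℤ) + 1) - 1 = (k : ℤ) := by ring
    simp only [e1, e2, e3, e4]
    omega
  have hsplit := Finset.sum_sub_distrib (s := Finset.range b)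
    (f := fun k : ℕ => (2 * ext T ((a : ℤ) - t + k) ((k : ℤ) + 1)
            - ext T ((a : ℤ) - t + k + 1) ((k : ℤ) + 1)
            - ext T ((a : ℤ) - t + k - 1) ((k : ℤ) + 1)))
    (g := fun k : ℕ => Rt T ((a : ℤ) - t + k) ((k : ℤ) + 1))
  have hb0 : tf T t b = 0 := by
    unfold tf
    rw [ext_high_j T _ _ (by omega) (by omega)]
    have := ext_nonneg T ((a : ℤ) - t + b) (b : ℤ)
    omega
  have h00 : tf T t 0 = 0 := by
    unfold tf
    have e0 : ((0 : ℕ) : ℤ) = (0 : ℤ) := by norm_num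
    simp only [e0]
    rw [ext_low_j T ((a : ℤ) - t + 0) 0 (le_refl 0)]
    have := ext_le T ((a : ℤ) - t + 0 - 1) ((0 : ℤ) + 1)
    omega
  rw [hmain]
  rw [hsplit, hb0, h00] at htel
  omega

lemma Rt_virtual (T : Fin a → Fin b → Fin (c + 1)) (t : ℤ) (k : ℕ) (ht0 : 0 ≤ t)
    (h : (a : ℤ) - t + k ≤ 0 ∨ (a : ℤ) < (a : ℤ) - t + k) :
    Rt T ((a : ℤ) - t + k) ((k : ℤ) + 1) = 0 := by
  set i : ℤ := (a : ℤ) - t + k with hi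
  unfold Rt
  have e3 : ((k : ℤ) + 1) + 1 = (k : ℤ) + 2 := by ring
  have e4 : ((k : ℤ) + 1) - 1 = (k : ℤ) := by ring
  simp only [e3, e4]
  rcases h with hlow | hhigh
  · rcases eq_or_lt_of_le hlow with h0 | hneg
    · -- i = 0
      rw [ext_low_i T i ((k : ℤ) + 1) hlow, ext_low_i T i ((k : ℤ) + 2) hlow,
        ext_low_i T (i - 1) ((k : ℤ) + 1) (by omega), ext_low_i T i (k : ℤ) hlow]
      have h1 := ext_le T (i + 1) ((k : ℤ) + 1)
      have h2 := ext_nonneg T (i + 1) ((k : ℤ) + 1)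
      omega
    · -- i ≤ -1
      rw [ext_low_i T i ((k : ℤ) + 1) hlow, ext_low_i T (i + 1) ((k : ℤ) + 1) (by omega),
        ext_low_i T i ((k : ℤ) + 2) hlow,
        ext_low_i T (i - 1) ((k : ℤ) + 1) (by omega), ext_low_i T i (k : ℤ) hlow]
      omega
  · have hk1 : 1 ≤ (k : ℤ) := by omega
    rw [ext_high_i T i ((k : ℤ) + 1) hhigh (by omega),
      ext_high_i T (i + 1) ((k : ℤ) + 1) (by omega) (by omega),
      ext_high_i T i ((k : ℤ) + 2) hhigh (by omega),
      ext_high_i T i (k : ℤ) hhigh hk1]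
    have h1 := ext_nonneg T (i - 1) ((k : ℤ) + 1)
    omega

section Involution

variable (i j : ℤ)

/-- The value with which the entry at the box cell `(i, j)` gets replaced by the flip
involution. -/
def flipv (T : Fin a → Fin b → Fin (c + 1)) : ℕ :=
  (max (ext T (i + 1) j) (ext T i (j + 1)) + min (ext T (i - 1) j) (ext T i (j - 1))
    - ext T i j).toNat ⊓ c

/-- The flip involution at the box cell `(i, j)`. -/
def flip (T : Fin a → Fin b → Fin (c + 1)) : Fin a → Fin b → Fin (c + 1) :=
  fun p q => if p.val = (i - 1).toNat ∧ q.val = (j - 1).toNat then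
    ⟨flipv i j T, by unfold flipv; omega⟩ else T p q

lemma flip_apply (T : Fin a → Fin b → Fin (c + 1)) (p : Fin a) (q : Fin b) :
    flip i j T p q = if p.val = (i - 1).toNat ∧ q.val = (j - 1).toNat then
      ⟨flipv i j T, by unfold flipv; omega⟩ else T p q := rfl

variable {i j}

lemma flipv_eq {T : Fin a → Fin b → Fin (c + 1)} (hT : T ∈ PlanePartitions a b c)
    (hbox : 1 ≤ i ∧ i ≤ (a : ℤ) ∧ 1 ≤ j ∧ j ≤ (b : ℤ)) :
    ((flipv i j T : ℕ) : ℤ)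
      = max (ext T (i + 1) j) (ext T i (j + 1)) + min (ext T (i - 1) j) (ext T i (j - 1))
        - ext T i j := by
  have hL : max (ext T (i + 1) j) (ext T i (j + 1)) ≤ ext T i j :=
    max_le (ext_anti_row hT i j) (ext_anti_col hT i j)
  have hU : ext T i j ≤ min (ext T (i - 1) j) (ext T i (j - 1)) := by
    refine le_min ?_ ?_
    · have := ext_anti_row hT (i - 1) j
      rwa [show i - 1 + 1 = i by ring] at this
    · have := ext_anti_col hT i (j - 1)
      rwa [show j - 1 + 1 = j by ring] at this
  have hL0 : 0 ≤ max (ext T (i + 1) j) (ext T i (j + 1)) :=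
    le_trans (ext_nonneg T (i + 1) j) (le_max_left _ _)
  have hUc : min (ext T (i - 1) j) (ext T i (j - 1)) ≤ (c : ℤ) :=
    le_trans (min_le_left _ _) (ext_le T (i - 1) j)
  unfold flipv
  omega

lemma ext_flip_ne (T : Fin a → Fin b → Fin (c + 1))
    (_ : 1 ≤ i ∧ i ≤ (a : ℤ) ∧ 1 ≤ j ∧ j ≤ (b : ℤ)) (i' j' : ℤ)
    (hne : ¬(i' = i ∧ j' = j)) : ext (flip i j T) i' j' = ext T i' j' := by
  unfold ext
  split_ifs with h1
  · have hcond : ¬(((⟨(i' - 1).toNat, by omega⟩ : Fin a)).val = (i - 1).toNat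
        ∧ ((⟨(j' - 1).toNat, by omega⟩ : Fin b)).val = (j - 1).toNat) := by
      simp only [Fin.val_mk]
      omega
    rw [flip_apply, if_neg hcond]
  · rfl
  · rfl

lemma ext_flip_eq {T : Fin a → Fin b → Fin (c + 1)} (hT : T ∈ PlanePartitions a b c)
    (hbox : 1 ≤ i ∧ i ≤ (a : ℤ) ∧ 1 ≤ j ∧ j ≤ (b : ℤ)) :
    ext (flip i j T) i j
      = max (ext T (i + 1) j) (ext T i (j + 1)) + min (ext T (i - 1) j) (ext T i (j - 1))
        - ext T i j := by
  rw [ext_box (flip i j T) i j hbox.1 hbox.2.1 hbox.2.2.1 hbox.2.2.2]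
  rw [flip_apply, if_pos (⟨rfl, rfl⟩ : _ ∧ _)]
  have : ((⟨flipv i j T, by unfold flipv; omega⟩ : Fin (c + 1)) : ℕ) = flipv i j T := rfl
  rw [this]
  exact flipv_eq hT hbox

lemma flip_mem {T : Fin a → Fin b → Fin (c + 1)} (hT : T ∈ PlanePartitions a b c)
    (hbox : 1 ≤ i ∧ i ≤ (a : ℤ) ∧ 1 ≤ j ∧ j ≤ (b : ℤ)) :
    flip i j T ∈ PlanePartitions a b c := by
  obtain ⟨hrow, hcol⟩ := (mem_pp T).1 hT
  obtain ⟨hb1, hb2, hb3, hb4⟩ := hbox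
  have hpa : (i - 1).toNat < a := by omega
  have hqb : (j - 1).toNat < b := by omega
  have hvle : ∀ q' : Fin b, (j - 1).toNat < q'.val →
      ((T ⟨(i - 1).toNat, hpa⟩ q' : ℕ) : ℤ) ≤ ((flipv i j T : ℕ) : ℤ) := by
    intro q' hq'
    have hj1b : j + 1 ≤ (b : ℤ) := by have := q'.isLt; omega
    have hx : ext T i (j + 1) =
        ((T ⟨(i - 1).toNat, by omega⟩ ⟨(j + 1 - 1).toNat, by omega⟩ : ℕ) : ℤ) :=
      ext_box T i (j + 1) (by omega) (by omega) (by omega) (by omega)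
    have hTle : T ⟨(i - 1).toNat, by omega⟩ q'
        ≤ T ⟨(i - 1).toNat, by omega⟩ ⟨(j + 1 - 1).toNat, by omega⟩ := by
      apply hrow
      simp only [Fin.le_def, Fin.val_mk]
      omega
    have h1 : ((T ⟨(i - 1).toNat, by omega⟩ q' : ℕ) : ℤ) ≤ ext T i (j + 1) := by
      rw [hx]; exact_mod_cast hTle
    have h2 : ext T i j ≤ min (ext T (i - 1) j) (ext T i (j - 1)) := by
      refine le_min ?_ ?_
      · have := ext_anti_row hT (i - 1) j
        rwa [show i - 1 + 1 = i by ring] at this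
      · have := ext_anti_col hT i (j - 1)
        rwa [show j - 1 + 1 = j by ring] at this
    have h3 : ext T i (j + 1) ≤ max (ext T (i + 1) j) (ext T i (j + 1)) := le_max_right _ _
    have hfv := flipv_eq hT ⟨hb1, hb2, hb3, hb4⟩
    omega
  have hvge : ∀ q' : Fin b, q'.val < (j - 1).toNat →
      ((flipv i j T : ℕ) : ℤ) ≤ ((T ⟨(i - 1).toNat, hpa⟩ q' : ℕ) : ℤ) := by
    intro q' hq'
    have hj2 : 2 ≤ j := by omega
    have hx : ext T i (j - 1) =
        ((T ⟨(i - 1).toNat, by omega⟩ ⟨(j - 1 - 1).toNat, by omega⟩ : ℕ) : ℤ) :=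
      ext_box T i (j - 1) (by omega) (by omega) (by omega) (by omega)
    have hTle : T ⟨(i - 1).toNat, by omega⟩ ⟨(j - 1 - 1).toNat, by omega⟩
        ≤ T ⟨(i - 1).toNat, by omega⟩ q' := by
      apply hrow
      simp only [Fin.le_def, Fin.val_mk]
      omega
    have h1 : ext T i (j - 1) ≤ ((T ⟨(i - 1).toNat, by omega⟩ q' : ℕ) : ℤ) := by
      rw [hx]; exact_mod_cast hTle
    have h2 : max (ext T (i + 1) j) (ext T i (j + 1)) ≤ ext T i j :=
      max_le (ext_anti_row hT i j) (ext_anti_col hT i j)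
    have h3 : min (ext T (i - 1) j) (ext T i (j - 1)) ≤ ext T i (j - 1) := min_le_right _ _
    have hfv := flipv_eq hT ⟨hb1, hb2, hb3, hb4⟩
    omega
  have hvleC : ∀ p' : Fin a, (i - 1).toNat < p'.val →
      ((T p' ⟨(j - 1).toNat, hqb⟩ : ℕ) : ℤ) ≤ ((flipv i j T : ℕ) : ℤ) := by
    intro p' hp'
    have hi1a : i + 1 ≤ (a : ℤ) := by have := p'.isLt; omega
    have hx : ext T (i + 1) j =
        ((T ⟨(i + 1 - 1).toNat, by omega⟩ ⟨(j - 1).toNat, by omega⟩ : ℕ) : ℤ) :=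
      ext_box T (i + 1) j (by omega) (by omega) (by omega) (by omega)
    have hTle : T p' ⟨(j - 1).toNat, by omega⟩
        ≤ T ⟨(i + 1 - 1).toNat, by omega⟩ ⟨(j - 1).toNat, by omega⟩ := by
      apply hcol
      simp only [Fin.le_def, Fin.val_mk]
      omega
    have h1 : ((T p' ⟨(j - 1).toNat, by omega⟩ : ℕ) : ℤ) ≤ ext T (i + 1) j := by
      rw [hx]; exact_mod_cast hTle
    have h2 : ext T i j ≤ min (ext T (i - 1) j) (ext T i (j - 1)) := by
      refine le_min ?_ ?_
      · have := ext_anti_row hT (i - 1) j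
        rwa [show i - 1 + 1 = i by ring] at this
      · have := ext_anti_col hT i (j - 1)
        rwa [show j - 1 + 1 = j by ring] at this
    have h3 : ext T (i + 1) j ≤ max (ext T (i + 1) j) (ext T i (j + 1)) := le_max_left _ _
    have hfv := flipv_eq hT ⟨hb1, hb2, hb3, hb4⟩
    omega
  have hvgeC : ∀ p' : Fin a, p'.val < (i - 1).toNat →
      ((flipv i j T : ℕ) : ℤ) ≤ ((T p' ⟨(j - 1).toNat, hqb⟩ : ℕ) : ℤ) := by
    intro p' hp'
    have hi2 : 2 ≤ i := by omega
    have hx : ext T (i - 1) j =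
        ((T ⟨(i - 1 - 1).toNat, by omega⟩ ⟨(j - 1).toNat, by omega⟩ : ℕ) : ℤ) :=
      ext_box T (i - 1) j (by omega) (by omega) (by omega) (by omega)
    have hTle : T ⟨(i - 1 - 1).toNat, by omega⟩ ⟨(j - 1).toNat, by omega⟩
        ≤ T p' ⟨(j - 1).toNat, by omega⟩ := by
      apply hcol
      simp only [Fin.le_def, Fin.val_mk]
      omega
    have h1 : ext T (i - 1) j ≤ ((T p' ⟨(j - 1).toNat, by omega⟩ : ℕ) : ℤ) := by
      rw [hx]; exact_mod_cast hTle
    have h2 : max (ext T (i + 1) j) (ext T i (j + 1)) ≤ ext T i j :=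
      max_le (ext_anti_row hT i j) (ext_anti_col hT i j)
    have h3 : min (ext T (i - 1) j) (ext T i (j - 1)) ≤ ext T (i - 1) j := min_le_left _ _
    have hfv := flipv_eq hT ⟨hb1, hb2, hb3, hb4⟩
    omega
  rw [mem_pp]
  constructor
  · intro p' q1 q2 hq
    rw [Fin.le_def, flip_apply, flip_apply,
      apply_ite (Fin.val : Fin (c + 1) → ℕ), apply_ite (Fin.val : Fin (c + 1) → ℕ)]
    simp only [Fin.val_mk]
    by_cases hA : p'.val = (i - 1).toNat ∧ q2.val = (j - 1).toNat
    · by_cases hB : p'.val = (i - 1).toNat ∧ q1.val = (j - 1).toNat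
      · rw [if_pos hA, if_pos hB]
      · rw [if_pos hA, if_neg hB]
        have hlt : q1.val < (j - 1).toNat := by
          have h1 := Fin.le_def.1 hq
          have hne : ¬(q1.val = (j - 1).toNat) := fun hh => hB ⟨hA.1, hh⟩
          omega
        rw [show p' = (⟨(i - 1).toNat, hpa⟩ : Fin a) from Fin.ext hA.1]
        exact_mod_cast hvge q1 hlt
    · by_cases hB : p'.val = (i - 1).toNat ∧ q1.val = (j - 1).toNat
      · rw [if_neg hA, if_pos hB]
        have hlt : (j - 1).toNat < q2.val := by
          have h1 := Fin.le_def.1 hq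
          have hne : ¬(q2.val = (j - 1).toNat) := fun hh => hA ⟨hB.1, hh⟩
          omega
        rw [show p' = (⟨(i - 1).toNat, hpa⟩ : Fin a) from Fin.ext hB.1]
        exact_mod_cast hvle q2 hlt
      · rw [if_neg hA, if_neg hB]
        exact Fin.le_def.1 (hrow p' q1 q2 hq)
  · intro p1 p2 q' hp
    rw [Fin.le_def, flip_apply, flip_apply,
      apply_ite (Fin.val : Fin (c + 1) → ℕ), apply_ite (Fin.val : Fin (c + 1) → ℕ)]
    simp only [Fin.val_mk]
    by_cases hA : p2.val = (i - 1).toNat ∧ q'.val = (j - 1).toNat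
    · by_cases hB : p1.val = (i - 1).toNat ∧ q'.val = (j - 1).toNat
      · rw [if_pos hA, if_pos hB]
      · rw [if_pos hA, if_neg hB]
        have hlt : p1.val < (i - 1).toNat := by
          have h1 := Fin.le_def.1 hp
          have hne : ¬(p1.val = (i - 1).toNat) := fun hh => hB ⟨hh, hA.2⟩
          omega
        rw [show q' = (⟨(j - 1).toNat, hqb⟩ : Fin b) from Fin.ext hA.2]
        exact_mod_cast hvgeC p1 hlt
    · by_cases hB : p1.val = (i - 1).toNat ∧ q'.val = (j - 1).toNat
      · rw [if_neg hA, if_pos hB]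
        have hlt : (i - 1).toNat < p2.val := by
          have h1 := Fin.le_def.1 hp
          have hne : ¬(p2.val = (i - 1).toNat) := fun hh => hA ⟨hh, hB.2⟩
          omega
        rw [show q' = (⟨(j - 1).toNat, hqb⟩ : Fin b) from Fin.ext hB.2]
        exact_mod_cast hvleC p2 hlt
      · rw [if_neg hA, if_neg hB]
        exact Fin.le_def.1 (hcol p1 p2 q' hp)

lemma Rt_flip {T : Fin a → Fin b → Fin (c + 1)} (hT : T ∈ PlanePartitions a b c)
    (hbox : 1 ≤ i ∧ i ≤ (a : ℤ) ∧ 1 ≤ j ∧ j ≤ (b : ℤ)) :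
    Rt (flip i j T) i j = -Rt T i j := by
  unfold Rt
  rw [ext_flip_ne T hbox (i + 1) j (by intro h; omega),
    ext_flip_ne T hbox i (j + 1) (by intro h; omega),
    ext_flip_ne T hbox (i - 1) j (by intro h; omega),
    ext_flip_ne T hbox i (j - 1) (by intro h; omega),
    ext_flip_eq hT hbox]
  ring

lemma flip_flip {T : Fin a → Fin b → Fin (c + 1)} (hT : T ∈ PlanePartitions a b c)
    (hbox : 1 ≤ i ∧ i ≤ (a : ℤ) ∧ 1 ≤ j ∧ j ≤ (b : ℤ)) :
    flip i j (flip i j T) = T := by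
  have hpa : (i - 1).toNat < a := by omega
  have hqb : (j - 1).toNat < b := by omega
  have hbx := ext_box T i j hbox.1 hbox.2.1 hbox.2.2.1 hbox.2.2.2
  have hv : flipv i j (flip i j T)
      = (T ⟨(i - 1).toNat, hpa⟩ ⟨(j - 1).toNat, hqb⟩ : ℕ) := by
    have hmem := flip_mem hT hbox
    have hfv2 := flipv_eq hmem hbox
    rw [ext_flip_ne T hbox (i + 1) j (by intro h; omega),
      ext_flip_ne T hbox i (j + 1) (by intro h; omega),
      ext_flip_ne T hbox (i - 1) j (by intro h; omega),
      ext_flip_ne T hbox i (j - 1) (by intro h; omega),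
      ext_flip_eq hT hbox] at hfv2
    have hfv2' : ((flipv i j (flip i j T) : ℕ) : ℤ)
        = ((T ⟨(i - 1).toNat, hpa⟩ ⟨(j - 1).toNat, hqb⟩ : ℕ) : ℤ) := by
      rw [hfv2, hbx]; ring
    exact_mod_cast hfv2'
  funext p' q'
  rw [flip_apply, flip_apply]
  by_cases hcell : p'.val = (i - 1).toNat ∧ q'.val = (j - 1).toNat
  · rw [if_pos hcell]
    apply Fin.ext
    show flipv i j (flip i j T) = (T p' q' : ℕ)
    rw [hv, show p' = (⟨(i - 1).toNat, hpa⟩ : Fin a) from Fin.ext hcell.1,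
      show q' = (⟨(j - 1).toNat, hqb⟩ : Fin b) from Fin.ext hcell.2]
  · rw [if_neg hcell, if_neg hcell]

lemma Rt_sum_zero (hi1 : 1 ≤ i) (hi2 : i ≤ (a : ℤ)) (hj1 : 1 ≤ j) (hj2 : j ≤ (b : ℤ)) :
    ∑ T ∈ PlanePartitions a b c, Rt T i j = 0 := by
  have hbox : 1 ≤ i ∧ i ≤ (a : ℤ) ∧ 1 ≤ j ∧ j ≤ (b : ℤ) := ⟨hi1, hi2, hj1, hj2⟩
  refine Finset.sum_involution (fun T _ => flip i j T) ?_ ?_ (fun T hT => flip_mem hT hbox)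
    (fun T hT => flip_flip hT hbox)
  · intro T hT
    rw [Rt_flip hT hbox]
    ring
  · intro T hT hRt hflip
    apply hRt
    have hflip' : flip i j T = T := hflip
    have h1 : ext (flip i j T) i j = ext T i j := by rw [hflip']
    rw [ext_flip_eq hT hbox] at h1
    unfold Rt
    omega

end Involution

lemma sum_Rt_window (t : ℤ) (ht0 : 0 ≤ t) :
    ∑ T ∈ PlanePartitions a b c, ∑ k ∈ Finset.range b,
      Rt T ((a : ℤ) - t + k) ((k : ℤ) + 1) = 0 := by
  rw [Finset.sum_comm]
  apply Finset.sum_eq_zero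
  intro k hk
  simp only [Finset.mem_range] at hk
  by_cases hg : 1 ≤ (a : ℤ) - t + k ∧ (a : ℤ) - t + k ≤ (a : ℤ)
  · exact Rt_sum_zero hg.1 hg.2 (by omega) (by omega)
  · apply Finset.sum_eq_zero
    intro T _
    exact Rt_virtual T t k ht0 (by omega)

/-- The expected diagonal-sum increments are all equal. -/
lemma sumWd_linear :
    ∀ t : ℕ, t + 1 ≤ a + b →
      (∑ T ∈ PlanePartitions a b c, Wd T ((t : ℤ) + 1))
        - (∑ T ∈ PlanePartitions a b c, Wd T (t : ℤ))
      = (∑ T ∈ PlanePartitions a b c, Wd T 1)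
        - (∑ T ∈ PlanePartitions a b c, Wd T 0) := by
  intro t
  induction t with
  | zero => intro _; norm_num
  | succ n ih =>
    intro hn
    have hkey : ∑ T ∈ PlanePartitions a b c,
        (2 * Wd T ((n : ℤ) + 1) - Wd T (n : ℤ) - Wd T ((n : ℤ) + 2)) = 0 := by
      have hcg : ∀ T ∈ PlanePartitions a b c,
          2 * Wd T ((n : ℤ) + 1) - Wd T (n : ℤ) - Wd T ((n : ℤ) + 2)
            = ∑ k ∈ Finset.range b, Rt T ((a : ℤ) - n + k) ((k : ℤ) + 1) :=
        fun T _ => key T (n : ℤ) (by omega) (by push_cast; omega)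
      rw [Finset.sum_congr rfl hcg]
      exact sum_Rt_window (n : ℤ) (by omega)
    have h2 : ∑ T ∈ PlanePartitions a b c,
        (2 * Wd T ((n : ℤ) + 1) - Wd T (n : ℤ) - Wd T ((n : ℤ) + 2))
        = 2 * (∑ T ∈ PlanePartitions a b c, Wd T ((n : ℤ) + 1))
          - (∑ T ∈ PlanePartitions a b c, Wd T (n : ℤ))
          - (∑ T ∈ PlanePartitions a b c, Wd T ((n : ℤ) + 2)) := by
      rw [Finset.mul_sum, ← Finset.sum_sub_distrib, ← Finset.sum_sub_distrib]
    have hih := ih (by omega)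
    have hcast : ((n + 1 : ℕ) : ℤ) = (n : ℤ) + 1 := by push_cast; ring
    rw [hcast, show (n : ℤ) + 1 + 1 = (n : ℤ) + 2 by ring]
    omega

lemma sumWd_value (x : ℕ) (hx : x ≤ a + b) :
    ((a : ℤ) + b) * (∑ T ∈ PlanePartitions a b c, Wd T (x : ℤ))
      = (x : ℤ) * ((b : ℤ) * c * (PlanePartitions a b c).card) := by
  set S := PlanePartitions a b c with hS
  set D : ℤ := (∑ T ∈ S, Wd T 1) - (∑ T ∈ S, Wd T 0) with hD
  have hz : (∑ T ∈ S, Wd T 0) = 0 := Finset.sum_eq_zero (fun T _ => Wd_zero T)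
  have hlin : ∀ t : ℕ, t ≤ a + b → (∑ T ∈ S, Wd T (t : ℤ)) = t * D := by
    intro t
    induction t with
    | zero =>
      intro _
      simpa using hz
    | succ n ih =>
      intro hn
      have h1 := sumWd_linear (a := a) (b := b) (c := c) n (by omega)
      have h2 := ih (by omega)
      rw [← hS] at h1
      have hcast : ((n + 1 : ℕ) : ℤ) = (n : ℤ) + 1 := by push_cast; ring
      rw [hcast, show ((n : ℤ) + 1) * D = (n : ℤ) * D + D by ring]
      omega
  have htop : (∑ T ∈ S, Wd T (((a + b : ℕ) : ℤ))) = ((a + b : ℕ) : ℤ) * D :=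
    hlin (a + b) le_rfl
  have htop2 : (∑ T ∈ S, Wd T (((a + b : ℕ) : ℤ))) = (b : ℤ) * c * S.card := by
    have h : ∀ T ∈ S, Wd T (((a + b : ℕ) : ℤ)) = (b : ℤ) * c := by
      intro T _
      rw [show (((a + b : ℕ) : ℤ)) = (a : ℤ) + b by push_cast; ring]
      exact Wd_top T
    rw [Finset.sum_congr rfl h, Finset.sum_const, nsmul_eq_mul]
    ring
  have hx' := hlin x hx
  rw [hx']
  have hab : ((a : ℤ) + b) * D = (b : ℤ) * c * S.card := by
    rw [← htop2, htop]
    push_cast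
    ring
  calc ((a : ℤ) + b) * ((x : ℤ) * D) = (x : ℤ) * (((a : ℤ) + b) * D) := by ring
    _ = (x : ℤ) * ((b : ℤ) * c * S.card) := by rw [hab]

lemma Wd_eq_diag (T : Fin a → Fin b → Fin (c + 1)) (x : ℕ) (hb : b ≤ x) (hx : x ≤ a) :
    Wd T (x : ℤ)
      = ∑ i ∈ Finset.Icc (a + 1 - x) (a + b - x), (entry a b c T i (x + i - a) : ℤ) := by
  rw [← Finset.Ico_add_one_right_eq_Icc, Finset.sum_Ico_eq_sum_range]
  rw [show (a + b - x + 1 - (a + 1 - x)) = b by omega]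
  unfold Wd
  apply Finset.sum_congr rfl
  intro k hk
  simp only [Finset.mem_range] at hk
  rw [show x + (a + 1 - x + k) - a = k + 1 by omega]
  have hbox : 1 ≤ a + 1 - x + k ∧ a + 1 - x + k ≤ a ∧ 1 ≤ k + 1 ∧ k + 1 ≤ b :=
    ⟨by omega, by omega, by omega, by omega⟩
  rw [entry, dif_pos hbox]
  rw [ext_box T ((a : ℤ) + 1 - (x : ℤ) + (k : ℤ)) ((k : ℤ) + 1)
    (by omega) (by omega) (by omega) (by omega)]
  have ef1 : (⟨((a : ℤ) + 1 - (x : ℤ) + (k : ℤ) - 1).toNat, by omega⟩ : Fin a)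
      = (⟨a + 1 - x + k - 1, by omega⟩ : Fin a) :=
    Fin.ext (by show ((a : ℤ) + 1 - (x : ℤ) + (k : ℤ) - 1).toNat = a + 1 - x + k - 1; omega)
  have ef2 : (⟨(((k : ℤ) + 1) - 1).toNat, by omega⟩ : Fin b)
      = (⟨k + 1 - 1, by omega⟩ : Fin b) :=
    Fin.ext (by show (((k : ℤ) + 1) - 1).toNat = k + 1 - 1; omega)
  rw [ef1, ef2]

lemma pp_nonempty : (PlanePartitions a b c).Nonempty := by
  refine ⟨fun _ _ => 0, ?_⟩
  rw [mem_pp]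
  exact ⟨fun _ _ _ _ => le_refl _, fun _ _ _ _ => le_refl _⟩

end PPDiag

theorem diagonal_expected_sum_middle_b_le_a (a b c : ℕ) (ha : 0 < a) (hb : 0 < b)
    (hc : 0 < c) (hab : b ≤ a) (x : ℕ) (hx1 : b ≤ x) (hx2 : x ≤ a) :
    ∑ i ∈ Finset.Icc (a + 1 - x) (a + b - x), E a b c i (x + i - a)
      = (b : ℚ) * c * x / ((a : ℚ) + b) := by
  classical
  set S := PlanePartitions a b c with hS
  have hN0 : 0 < S.card := Finset.card_pos.mpr PPDiag.pp_nonempty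
  have hNQ : ((S.card : ℚ)) ≠ 0 := by positivity
  have habQ : ((a : ℚ) + b) ≠ 0 := by positivity
  have hmain := PPDiag.sumWd_value (a := a) (b := b) (c := c) x (by omega)
  have hper : ∀ T ∈ S, (∑ i ∈ Finset.Icc (a + 1 - x) (a + b - x),
      (entry a b c T i (x + i - a) : ℚ)) = ((PPDiag.Wd T (x : ℤ) : ℤ) : ℚ) := by
    intro T _
    rw [PPDiag.Wd_eq_diag T x hx1 hx2]
    push_cast
    ring
  have hlhs : ∑ i ∈ Finset.Icc (a + 1 - x) (a + b - x), E a b c i (x + i - a)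
      = (((∑ T ∈ S, PPDiag.Wd T (x : ℤ)) : ℤ) : ℚ) / (S.card : ℚ) := by
    unfold E
    rw [← Finset.sum_div]
    congr 1
    rw [Finset.sum_comm, Finset.sum_congr rfl hper]
    push_cast
    ring
  rw [hlhs, div_eq_div_iff hNQ habQ]
  have hQ : ((a : ℚ) + b) * (((∑ T ∈ S, PPDiag.Wd T (x : ℤ)) : ℤ) : ℚ)
      = (x : ℚ) * ((b : ℚ) * c * (S.card : ℚ)) := by
    exact_mod_cast hmain
  linear_combination hQ
end
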